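/- arXiv:2003.06001 — 7 statements merged into one kernel-verified Lean document; each statement's English description precedes it below -/
import Mathlib

section
/- Moment bound for the quadratic variation of a discrete Ito integral: let p ≥ 2 and let T > 0, N ∈ ℕ, τ = T/N, (Ω, 𝓕, ℙ) with discrete filtration (𝓕ⁿ)_{n=0}^N and real random variables ξ¹, …, ξᴺ satisfy the discrete increment assumption with parameter p and constant C₀. Let H be a separable real Hilbert space and let g⁰, …, g^{N−1}: Ω → H be random variables with g^{m−1} 𝓕^{m−1}-measurable and 𝔼[‖g^{m−1}‖_H^p] < ∞ for each m. Then there is a constant C_p > 0, depending only on p and C₀, such that for every 1 ≤ n ≤ N, 𝔼[(Σ_{m=1}^n ‖g^{m−1} ξᵐ‖_H²)^{p/2}] ≤ C_p (nτ)^{p/2 − 1} Σ_{m=1}^n τ 𝔼[‖g^{m−1}‖_H^p]. -/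
open MeasureTheory ProbabilityTheory Filter

/-- Moment bound for the quadratic variation of a discrete Ito integral. -/
theorem stmt_1 (p C₀ : ℝ) (hp : 2 ≤ p) (hC₀ : 0 < C₀) :
    ∃ Cp : ℝ, 0 < Cp ∧
      ∀ (Ω : Type) [m0 : MeasurableSpace Ω] (P : Measure Ω), IsProbabilityMeasure P →
      ∀ (T : ℝ), 0 < T → ∀ (N : ℕ), 1 ≤ N → ∀ (τ : ℝ), τ = T / N →
      ∀ (ℱ : ℕ → MeasurableSpace Ω), (∀ n, ℱ n ≤ m0) → Monotone ℱ →
      ∀ (ξ : ℕ → Ω → ℝ),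
        (∀ n, 1 ≤ n → n ≤ N → ∫ ω, ξ n ω ∂P = 0) →
        (∀ n, 1 ≤ n → n ≤ N → ∫ ω, (ξ n ω) ^ 2 ∂P = τ) →
        (∀ n, 1 ≤ n → n ≤ N → MemLp (ξ n) (ENNReal.ofReal p) P) →
        (∀ n, 1 ≤ n → n ≤ N → ∫ ω, |ξ n ω| ^ p ∂P ≤ C₀ * τ ^ (p / 2)) →
        (∀ n, 1 ≤ n → n ≤ N → Measurable[ℱ n] (ξ n)) →
        (∀ n, 1 ≤ n → n ≤ N →
          Indep (MeasurableSpace.comap (ξ n) inferInstance) (ℱ (n - 1)) P) →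
      ∀ (H : Type) [NormedAddCommGroup H] [InnerProductSpace ℝ H] [CompleteSpace H],
        TopologicalSpace.SeparableSpace H →
      ∀ (g : ℕ → Ω → H),
        (∀ m, m ≤ N - 1 → StronglyMeasurable[ℱ m] (g m)) →
        (∀ m, m ≤ N - 1 → Integrable (fun ω => ‖g m ω‖ ^ p) P) →
      ∀ n, 1 ≤ n → n ≤ N →
        ∫ ω, (∑ m ∈ Finset.Icc 1 n, ‖ξ m ω • g (m - 1) ω‖ ^ 2) ^ (p / 2) ∂P
          ≤ Cp * ((n : ℝ) * τ) ^ (p / 2 - 1)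
              * ∑ m ∈ Finset.Icc 1 n, τ * ∫ ω, ‖g (m - 1) ω‖ ^ p ∂P := by
  have hp0 : (0:ℝ) < p := lt_of_lt_of_le two_pos hp
  have hq1 : (1:ℝ) ≤ p / 2 := by linarith
  refine ⟨C₀, hC₀, ?_⟩
  intro Ω m0 P hP T hT N hN τ hτ ℱ hℱle hℱmono ξ hmean hvar hmem hpmom hmeas hInd
    H _ _ _ hsep g hgm hgp n hn1 hnN
  have hτ0 : 0 < τ := by
    rw [hτ]; positivity
  set s := Finset.Icc 1 n with hs
  have hcard : (s.card : ℝ) = n := by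
    rw [hs, Nat.card_Icc]; simp
  -- B_m integrable
  have hBint : ∀ m ∈ s, Integrable (fun ω => ‖g (m - 1) ω‖ ^ p) P := by
    intro m hm
    obtain ⟨hm1, hmn⟩ := Finset.mem_Icc.mp hm
    exact hgp (m - 1) (by omega)
  -- A_m integrable
  have hAint : ∀ m ∈ s, Integrable (fun ω => |ξ m ω| ^ p) P := by
    intro m hm
    obtain ⟨hm1, hmn⟩ := Finset.mem_Icc.mp hm
    have := (hmem m hm1 (hmn.trans hnN)).integrable_norm_rpow
      (by simp [ENNReal.ofReal_eq_zero]; linarith) ENNReal.ofReal_ne_top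
    simpa [ENNReal.toReal_ofReal hp0.le, Real.norm_eq_abs] using this
  -- independence of |ξ m|^p and ‖g (m-1)‖^p
  have hindep : ∀ m ∈ s,
      IndepFun (fun ω => |ξ m ω| ^ p) (fun ω => ‖g (m - 1) ω‖ ^ p) P := by
    intro m hm
    obtain ⟨hm1, hmn⟩ := Finset.mem_Icc.mp hm
    rw [IndepFun_iff_Indep]
    have hφ : Measurable (fun x : ℝ => |x| ^ p) :=
      ((Real.continuous_rpow_const hp0.le).comp continuous_abs).measurable
    refine indep_of_indep_of_le_right (indep_of_indep_of_le_left
      (hInd m hm1 (hmn.trans hnN)) ?_) ?_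
    · rw [show (fun ω => |ξ m ω| ^ p) = (fun x : ℝ => |x| ^ p) ∘ ξ m from rfl,
        ← MeasurableSpace.comap_comp]
      exact MeasurableSpace.comap_mono hφ.comap_le
    · have hgB : Measurable[ℱ (m - 1)] (fun ω => ‖g (m - 1) ω‖ ^ p) :=
        (Real.continuous_rpow_const hp0.le).measurable.comp
          (hgm (m - 1) (by omega)).norm.measurable
      exact hgB.comap_le
  have hABint : ∀ m ∈ s, Integrable (fun ω => |ξ m ω| ^ p * ‖g (m - 1) ω‖ ^ p) P := by
    intro m hm
    exact (hindep m hm).integrable_mul (hAint m hm) (hBint m hm)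
  -- pointwise power mean bound
  have hpow : ∀ (x : ℝ), 0 ≤ x → (x ^ 2) ^ (p / 2) = x ^ p := by
    intro x hx
    rw [← Real.rpow_natCast x 2, ← Real.rpow_mul hx]
    norm_num
    congr 1
    ring
  have hpt : ∀ ω, (∑ m ∈ s, ‖ξ m ω • g (m - 1) ω‖ ^ 2) ^ (p / 2)
      ≤ (n : ℝ) ^ (p / 2 - 1) * ∑ m ∈ s, |ξ m ω| ^ p * ‖g (m - 1) ω‖ ^ p := by
    intro ω
    have h1 := Real.rpow_sum_le_const_mul_sum_rpow s
      (fun m => ‖ξ m ω • g (m - 1) ω‖ ^ 2) hq1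
    simp only [abs_pow, abs_norm, hcard] at h1
    refine h1.trans_eq ?_
    congr 1
    refine Finset.sum_congr rfl fun m _ => ?_
    rw [norm_smul, Real.norm_eq_abs, mul_pow, Real.mul_rpow (pow_two_nonneg _)
      (pow_two_nonneg _), hpow _ (abs_nonneg _), hpow _ (norm_nonneg _)]
  -- dominating function is integrable
  have hFint : Integrable (fun ω =>
      (n : ℝ) ^ (p / 2 - 1) * ∑ m ∈ s, |ξ m ω| ^ p * ‖g (m - 1) ω‖ ^ p) P :=
    (integrable_finset_sum s hABint).const_mul _
  have hmono : ∫ ω, (∑ m ∈ s, ‖ξ m ω • g (m - 1) ω‖ ^ 2) ^ (p / 2) ∂P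
      ≤ ∫ ω, (n : ℝ) ^ (p / 2 - 1) * ∑ m ∈ s, |ξ m ω| ^ p * ‖g (m - 1) ω‖ ^ p ∂P := by
    refine integral_mono_of_nonneg (Eventually.of_forall fun ω => ?_) hFint
      (Eventually.of_forall hpt)
    exact Real.rpow_nonneg (Finset.sum_nonneg fun m _ => pow_two_nonneg _) _
  refine hmono.trans ?_
  rw [integral_const_mul, integral_finset_sum s hABint]
  have hBnonneg : ∀ m ∈ s, 0 ≤ ∫ ω, ‖g (m - 1) ω‖ ^ p ∂P :=
    fun m _ => integral_nonneg fun ω => Real.rpow_nonneg (norm_nonneg _) _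
  have hterm : ∀ m ∈ s, ∫ ω, |ξ m ω| ^ p * ‖g (m - 1) ω‖ ^ p ∂P
      ≤ C₀ * τ ^ (p / 2) * ∫ ω, ‖g (m - 1) ω‖ ^ p ∂P := by
    intro m hm
    obtain ⟨hm1, hmn⟩ := Finset.mem_Icc.mp hm
    have heq : ∫ ω, |ξ m ω| ^ p * ‖g (m - 1) ω‖ ^ p ∂P
        = (∫ ω, |ξ m ω| ^ p ∂P) * ∫ ω, ‖g (m - 1) ω‖ ^ p ∂P :=
      (hindep m hm).integral_mul_eq_mul_integral (hAint m hm).aestronglyMeasurable (hBint m hm).aestronglyMeasurable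
    rw [heq]
    exact mul_le_mul_of_nonneg_right (hpmom m hm1 (hmn.trans hnN)) (hBnonneg m hm)
  have hsum : ∑ m ∈ s, ∫ ω, |ξ m ω| ^ p * ‖g (m - 1) ω‖ ^ p ∂P
      ≤ ∑ m ∈ s, C₀ * τ ^ (p / 2) * ∫ ω, ‖g (m - 1) ω‖ ^ p ∂P :=
    Finset.sum_le_sum hterm
  have hn0 : (0:ℝ) ≤ (n : ℝ) := Nat.cast_nonneg n
  calc (n : ℝ) ^ (p / 2 - 1) * ∑ m ∈ s, ∫ ω, |ξ m ω| ^ p * ‖g (m - 1) ω‖ ^ p ∂P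
      ≤ (n : ℝ) ^ (p / 2 - 1) * ∑ m ∈ s, C₀ * τ ^ (p / 2) * ∫ ω, ‖g (m - 1) ω‖ ^ p ∂P :=
        mul_le_mul_of_nonneg_left hsum (Real.rpow_nonneg hn0 _)
    _ = C₀ * ((n : ℝ) * τ) ^ (p / 2 - 1) * ∑ m ∈ s, τ * ∫ ω, ‖g (m - 1) ω‖ ^ p ∂P := by
        rw [Real.mul_rpow hn0 hτ0.le]
        have hfac : τ ^ (p / 2 - 1) * τ = τ ^ (p / 2) := by
          rw [Real.rpow_sub_one hτ0.ne', div_mul_cancel₀ _ hτ0.ne']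
        have h1 : ∑ m ∈ s, C₀ * τ ^ (p / 2) * ∫ ω, ‖g (m - 1) ω‖ ^ p ∂P
            = C₀ * τ ^ (p / 2) * ∑ m ∈ s, ∫ ω, ‖g (m - 1) ω‖ ^ p ∂P :=
          (Finset.mul_sum _ _ _).symm
        have h2 : ∑ m ∈ s, τ * ∫ ω, ‖g (m - 1) ω‖ ^ p ∂P
            = τ * ∑ m ∈ s, ∫ ω, ‖g (m - 1) ω‖ ^ p ∂P :=
          (Finset.mul_sum _ _ _).symm
        rw [h1, h2, ← hfac]
        ring
end

section
/- Extended Portmanteau / mapping theorem, convergence of pushforwards: let X be a topological space admitting a countable family of continuous real-valued functions that separates points. Let (μ_k)_{k∈ℕ} be a tight sequence of Borel probability measures on X converging weakly to a Borel probability measure μ. Let ζ_k, ζ: X → ℝ be Borel measurable for every k, and set N = {x ∈ X : there exists a sequence x_k → x in X such that (ζ_k(x_k)) does not converge to ζ(x)}. If the outer measure of N under μ is zero, i.e. inf{μ(B) : N ⊆ B, B Borel} = 0, then the pushforward measures μ_k ∘ ζ_k⁻¹ converge weakly to μ ∘ ζ⁻¹ as Borel probability measures on ℝ. -/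
open MeasureTheory Filter Topology

/-- Extended Portmanteau / mapping theorem: convergence of pushforwards. -/
theorem stmt_4 {X : Type*} [TopologicalSpace X] [MeasurableSpace X] [BorelSpace X]
    (h : ℕ → X → ℝ) (hcont : ∀ n, Continuous (h n))
    (hsep : ∀ x y : X, x ≠ y → ∃ n, h n x ≠ h n y)
    (μk : ℕ → Measure X) (μ : Measure X)
    (hprobk : ∀ k, IsProbabilityMeasure (μk k)) (hprob : IsProbabilityMeasure μ)
    (htight : ∀ ε : ENNReal, 0 < ε → ∃ K : Set X, IsCompact K ∧ ∀ k, 1 - ε ≤ μk k K)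
    (hconv : ∀ φ : BoundedContinuousFunction X ℝ,
      Tendsto (fun k => ∫ x, φ x ∂(μk k)) atTop (𝓝 (∫ x, φ x ∂μ)))
    (ζk : ℕ → X → ℝ) (ζ : X → ℝ)
    (hζk : ∀ k, Measurable (ζk k)) (hζ : Measurable ζ)
    (hN : μ {x : X | ∃ xs : ℕ → X, Tendsto xs atTop (𝓝 x) ∧
        ¬ Tendsto (fun k => ζk k (xs k)) atTop (𝓝 (ζ x))} = 0) :
    ∀ φ : BoundedContinuousFunction ℝ ℝ,
      Tendsto (fun k => ∫ t, φ t ∂((μk k).map (ζk k))) atTop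
        (𝓝 (∫ t, φ t ∂(μ.map ζ))) := by
  classical
  set N := {x : X | ∃ xs : ℕ → X, Tendsto xs atTop (𝓝 x) ∧
      ¬ Tendsto (fun k => ζk k (xs k)) atTop (𝓝 (ζ x))} with hNdef
  -- the embedding into ℝ^ℕ
  set f : X → (ℕ → ℝ) := fun x n => h n x with hfdef
  have hfc : Continuous f := continuous_pi fun n => hcont n
  have hfinj : Function.Injective f := by
    intro x y hxy
    by_contra hne
    obtain ⟨n, hn⟩ := hsep x y hne
    exact hn (congrFun hxy n)
  haveI : T2Space X := T2Space.of_injective_continuous hfinj hfc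
  -- pushforwards to ℝ^ℕ
  have hfm : Measurable f := hfc.measurable
  haveI Pprob : IsProbabilityMeasure (μ.map f) := Measure.isProbabilityMeasure_map hfm.aemeasurable
  haveI Pkprob : ∀ k, IsProbabilityMeasure ((μk k).map f) :=
    fun k => Measure.isProbabilityMeasure_map hfm.aemeasurable
  set P : ProbabilityMeasure (ℕ → ℝ) := ⟨μ.map f, Pprob⟩ with hPdef
  set Pk : ℕ → ProbabilityMeasure (ℕ → ℝ) := fun k => ⟨(μk k).map f, Pkprob k⟩ with hPkdef
  -- weak convergence of the pushforwards on ℝ^ℕ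
  have hPconv : Tendsto Pk atTop (𝓝 P) := by
    refine ProbabilityMeasure.tendsto_iff_forall_integral_tendsto.mpr fun ψ => ?_
    have key : ∀ (m : Measure X), IsProbabilityMeasure m →
        ∫ y, ψ y ∂(m.map f) = ∫ x, (ψ.compContinuous ⟨f, hfc⟩) x ∂m := by
      intro m _
      rw [integral_map hfm.aemeasurable ψ.continuous.measurable.aestronglyMeasurable]
      rfl
    have := hconv (ψ.compContinuous ⟨f, hfc⟩)
    simp only [hPkdef, hPdef]
    convert this using 2 with k
    · exact key (μk k) (hprobk k)
    · exact key μ hprob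
  -- portmanteau on ℝ^ℕ: limsup over closed sets
  have hY_closed : ∀ C : Set (ℕ → ℝ), IsClosed C →
      (atTop.limsup fun k => ((μk k).map f) C) ≤ (μ.map f) C := by
    intro C hC
    exact ProbabilityMeasure.limsup_measure_closed_le_of_tendsto hPconv hC
  -- THE KEY ESTIMATE: closed-set limsup bound for the pushforwards under ζk
  have key : ∀ F : Set ℝ, IsClosed F →
      (atTop.limsup fun k => (μk k) (ζk k ⁻¹' F)) ≤ μ (ζ ⁻¹' F) := by
    intro F hF
    refine ENNReal.le_of_forall_pos_le_add fun ε hε _ => ?_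
    set δ : ENNReal := (ε : ENNReal) / 2 with hδdef
    have hδpos : 0 < δ := ENNReal.half_pos (ENNReal.coe_ne_zero.mpr hε.ne')
    obtain ⟨K, hKcomp, hKtight⟩ := htight δ hδpos
    have hKclosed : IsClosed K := hKcomp.isClosed
    set S : ℕ → Set X := fun m => ⋃ k, ⋃ (_ : m ≤ k), (ζk k ⁻¹' F ∩ K) with hSdef
    have hSsubK : ∀ m, S m ⊆ K := fun m => Set.iUnion₂_subset fun k _ => Set.inter_subset_right
    set B : ℕ → Set X := fun m => closure (S m) with hBdef
    have hBclosed : ∀ m, IsClosed (B m) := fun m => isClosed_closure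
    have hBsubK : ∀ m, B m ⊆ K := fun m => closure_minimal (hSsubK m) hKclosed
    have hBanti : Antitone B := by
      intro m m' hmm'
      apply closure_mono
      intro y hy
      simp only [hSdef, Set.mem_iUnion] at hy ⊢
      obtain ⟨k, hk, hyk⟩ := hy
      exact ⟨k, hmm'.trans hk, hyk⟩
    have hcompl : ∀ k, (μk k) Kᶜ ≤ δ := by
      intro k
      haveI := hprobk k
      rw [prob_compl_eq_one_sub hKcomp.measurableSet]
      calc 1 - μk k K ≤ 1 - (1 - δ) := tsub_le_tsub_left (hKtight k) 1
        _ ≤ δ := tsub_tsub_le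
    have step1 : ∀ m k, m ≤ k → (μk k) (ζk k ⁻¹' F) ≤ (μk k) (B m) + δ := by
      intro m k hmk
      have hsubB : ζk k ⁻¹' F ∩ K ⊆ B m := by
        refine subset_trans ?_ subset_closure
        intro y hy
        simp only [hSdef, Set.mem_iUnion]
        exact ⟨k, hmk, hy⟩
      calc (μk k) (ζk k ⁻¹' F)
          ≤ (μk k) (ζk k ⁻¹' F ∩ K) + (μk k) (ζk k ⁻¹' F \ K) :=
            measure_le_inter_add_diff _ _ _
        _ ≤ (μk k) (B m) + δ := by
            refine add_le_add (measure_mono hsubB) ?_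
            exact le_trans (measure_mono (Set.diff_subset_compl _ _)) (hcompl k)
    have hBY : ∀ m, (atTop.limsup fun k => (μk k) (B m)) ≤ μ (B m) := by
      intro m
      have hBcomp : IsCompact (B m) := hKcomp.of_isClosed_subset (hBclosed m) (hBsubK m)
      have hImg : IsClosed (f '' B m) := (hBcomp.image hfc).isClosed
      have heq : ∀ ρ : Measure X, ρ.map f (f '' B m) = ρ (B m) := by
        intro ρ
        rw [Measure.map_apply hfm hImg.measurableSet, Set.preimage_image_eq _ hfinj]
      calc (atTop.limsup fun k => (μk k) (B m))
          = atTop.limsup (fun k => ((μk k).map f) (f '' B m)) := by simp only [heq]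
        _ ≤ (μ.map f) (f '' B m) := hY_closed _ hImg
        _ = μ (B m) := heq μ
    have step2 : ∀ m, (atTop.limsup fun k => (μk k) (ζk k ⁻¹' F)) ≤ μ (B m) + δ := by
      intro m
      have h1 : (atTop.limsup fun k => (μk k) (ζk k ⁻¹' F)) ≤
          atTop.limsup (fun k => (μk k) (B m) + δ) :=
        limsup_le_limsup
          (by filter_upwards [eventually_ge_atTop m] with k hk using step1 m k hk)
      have h2 : atTop.limsup (fun k => (μk k) (B m) + δ)
          = (atTop.limsup fun k => (μk k) (B m)) + δ := by
        refine limsup_add_const atTop (fun k => (μk k) (B m)) δ ?_ ?_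
        · exact isBoundedUnder_of ⟨⊤, fun k => le_top⟩
        · exact (isBoundedUnder_of ⟨0, fun k => zero_le⟩ :
            IsBoundedUnder (· ≥ ·) atTop fun k => (μk k) (B m)).isCoboundedUnder_le
      refine h1.trans ?_
      rw [h2]
      exact add_le_add_left (hBY m) δ
    have hInter : Tendsto (fun m => μ (B m)) atTop (𝓝 (μ (⋂ m, B m))) :=
      tendsto_measure_iInter_atTop
        (fun m => (hBclosed m).measurableSet.nullMeasurableSet) hBanti
        ⟨0, measure_ne_top μ _⟩
    have hsub : (⋂ m, B m) ⊆ ζ ⁻¹' F ∪ N := by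
      intro x hx
      by_cases hxN : x ∈ N
      · exact Or.inr hxN
      left
      have hxK : x ∈ K := hBsubK 0 (Set.mem_iInter.mp hx 0)
      haveI : CompactSpace ↥K := isCompact_iff_compactSpace.mp hKcomp
      have hfK : Continuous (fun z : ↥K => f ↑z) := hfc.comp continuous_subtype_val
      have hfKinj : Function.Injective (fun z : ↥K => f ↑z) :=
        fun a b hab => Subtype.ext (hfinj hab)
      have hemb := hfK.isClosedEmbedding hfKinj
      haveI : TopologicalSpace.MetrizableSpace ↥K := hemb.toIsEmbedding.metrizableSpace
      letI : MetricSpace ↥K := TopologicalSpace.metrizableSpaceMetric ↥K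
      set x' : ↥K := ⟨x, hxK⟩ with hx'def
      have hxcl : ∀ m, x' ∈ closure (Subtype.val ⁻¹' S m) := by
        intro m
        rw [closure_subtype]
        have himg : Subtype.val '' (Subtype.val ⁻¹' S m : Set ↥K) = S m := by
          rw [Set.image_preimage_eq_inter_range, Subtype.range_val]
          exact Set.inter_eq_self_of_subset_left (hSsubK m)
        rw [himg]
        exact Set.mem_iInter.mp hx m
      have hex : ∀ m j : ℕ, ∃ p : ℕ × ↥K,
          m ≤ p.1 ∧ ζk p.1 ↑p.2 ∈ F ∧ dist p.2 x' < 1 / ((j : ℝ) + 1) := by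
        intro m j
        obtain ⟨b, hbS, hbd⟩ :=
          Metric.mem_closure_iff.mp (hxcl m) (1 / ((j : ℝ) + 1)) (by positivity)
        simp only [hSdef, Set.mem_preimage, Set.mem_iUnion, Set.mem_inter_iff] at hbS
        obtain ⟨k, hk, hbF, -⟩ := hbS
        exact ⟨(k, b), hk, hbF, by rwa [dist_comm]⟩
      choose g hg1 hg2 hg3 using hex
      set u : ℕ → ℕ × ↥K :=
        fun j => Nat.rec (g 0 0) (fun j prev => g (prev.1 + 1) (j + 1)) j with hudef
      have hu_succ : ∀ j, u (j + 1) = g ((u j).1 + 1) (j + 1) := fun j => rfl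
      have hmono : StrictMono (fun j => (u j).1) := by
        apply strictMono_nat_of_lt_succ
        intro j
        have h1 := hg1 ((u j).1 + 1) (j + 1)
        rw [← hu_succ j] at h1
        omega
      have huF : ∀ j, ζk (u j).1 ↑(u j).2 ∈ F := by
        intro j
        cases j with
        | zero => exact hg2 0 0
        | succ j => exact hg2 _ _
      have hud : ∀ j, dist (u j).2 x' < 1 / ((j : ℝ) + 1) := by
        intro j
        cases j with
        | zero => exact hg3 0 0
        | succ j => exact hg3 _ _
      have hz_tendsto : Tendsto (fun j => (u j).2) atTop (𝓝 x') := by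
        rw [tendsto_iff_dist_tendsto_zero]
        apply squeeze_zero (fun j => dist_nonneg) (fun j => (hud j).le)
        exact tendsto_one_div_add_atTop_nhds_zero_nat
      have hzX : Tendsto (fun j => ((u j).2 : X)) atTop (𝓝 x) :=
        (continuous_subtype_val.tendsto x').comp hz_tendsto
      set xs : ℕ → X :=
        fun k => if hk : ∃ j, (u j).1 = k then ↑((u hk.choose).2) else x with hxsdef
      have hxs_at : ∀ j, xs ((u j).1) = ↑((u j).2) := by
        intro j
        have hk : ∃ j', (u j').1 = (u j).1 := ⟨j, rfl⟩
        have hcj : hk.choose = j := hmono.injective hk.choose_spec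
        simp only [hxsdef, dif_pos hk, hcj]
      have hxs_tendsto : Tendsto xs atTop (𝓝 x) := by
        rw [tendsto_atTop']
        intro U hU
        obtain ⟨J, hJ⟩ := tendsto_atTop'.mp hzX U hU
        refine ⟨(u J).1, fun k hk => ?_⟩
        by_cases hk' : ∃ j, (u j).1 = k
        · have hspec := hk'.choose_spec
          have hJle : J ≤ hk'.choose := by
            by_contra hlt
            push_neg at hlt
            have h3 : (u hk'.choose).1 < (u J).1 := hmono hlt
            omega
          have hxk : xs k = ↑((u hk'.choose).2) := by simp only [hxsdef, dif_pos hk']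
          rw [hxk]
          exact hJ _ hJle
        · have hxk : xs k = x := by simp only [hxsdef, dif_neg hk']
          rw [hxk]
          exact mem_of_mem_nhds hU
      have hfreq : ∃ᶠ k in atTop, ζk k (xs k) ∈ F := by
        rw [frequently_atTop]
        intro a
        have hle : a ≤ (u a).1 := hmono.le_apply
        refine ⟨(u a).1, hle, ?_⟩
        rw [hxs_at a]
        exact huF a
      have hxconv : Tendsto (fun k => ζk k (xs k)) atTop (𝓝 (ζ x)) := by
        by_contra hcon
        exact hxN ⟨xs, hxs_tendsto, hcon⟩
      have hclF : ζ x ∈ closure F := mem_closure_of_frequently_of_tendsto hfreq hxconv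
      rwa [hF.closure_eq] at hclF
    have hμInter : μ (⋂ m, B m) ≤ μ (ζ ⁻¹' F) := by
      calc μ (⋂ m, B m) ≤ μ (ζ ⁻¹' F ∪ N) := measure_mono hsub
        _ ≤ μ (ζ ⁻¹' F) + μ N := measure_union_le _ _
        _ = μ (ζ ⁻¹' F) := by rw [hN, add_zero]
    have hlt : μ (⋂ m, B m) < μ (⋂ m, B m) + δ :=
      ENNReal.lt_add_right (measure_ne_top μ _) hδpos.ne'
    obtain ⟨m, hm⟩ := (hInter.eventually_le_const hlt).exists
    calc (atTop.limsup fun k => (μk k) (ζk k ⁻¹' F)) ≤ μ (B m) + δ := step2 m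
      _ ≤ (μ (⋂ m, B m) + δ) + δ := add_le_add_left hm δ
      _ ≤ μ (ζ ⁻¹' F) + (δ + δ) := by rw [add_assoc]; exact add_le_add_left hμInter _
      _ = μ (ζ ⁻¹' F) + ε := by rw [hδdef, ENNReal.add_halves]
  -- assemble the conclusion via portmanteau on ℝ
  haveI νprob : IsProbabilityMeasure (μ.map ζ) := Measure.isProbabilityMeasure_map hζ.aemeasurable
  haveI νkprob : ∀ k, IsProbabilityMeasure ((μk k).map (ζk k)) :=
    fun k => Measure.isProbabilityMeasure_map (hζk k).aemeasurable
  set ν : ProbabilityMeasure ℝ := ⟨μ.map ζ, νprob⟩ with hνdef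
  set νk : ℕ → ProbabilityMeasure ℝ := fun k => ⟨(μk k).map (ζk k), νkprob k⟩ with hνkdef
  have key' : ∀ F : Set ℝ, IsClosed F →
      (atTop.limsup fun k => ((νk k : Measure ℝ)) F) ≤ (ν : Measure ℝ) F := by
    intro F hF
    have h1 : ∀ k, ((νk k : Measure ℝ)) F = (μk k) (ζk k ⁻¹' F) := by
      intro k
      exact Measure.map_apply (hζk k) hF.measurableSet
    have h2 : (ν : Measure ℝ) F = μ (ζ ⁻¹' F) := Measure.map_apply hζ hF.measurableSet
    simp only [h1, h2]
    exact key F hF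
  have h_opens : ∀ G : Set ℝ, IsOpen G → ν G ≤ atTop.liminf (fun k => νk k G) := by
    intro G hG
    have hEnn : (ν : Measure ℝ) G ≤ atTop.liminf fun k => (νk k : Measure ℝ) G :=
      le_measure_liminf_of_limsup_measure_compl_le hG.measurableSet
        (key' Gᶜ (isClosed_compl_iff.mpr hG))
    have aux : ENNReal.ofNNReal (atTop.liminf (fun k => νk k G)) =
        atTop.liminf (ENNReal.ofNNReal ∘ fun k => νk k G) := by
      refine Monotone.map_liminf_of_continuousAt (F := atTop) ENNReal.coe_mono (νk · G) ?_ ?_ ?_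
      · exact ENNReal.continuous_coe.continuousAt
      · exact IsBoundedUnder.isCoboundedUnder_ge ⟨1, by simp⟩
      · exact ⟨0, by simp⟩
    rw [← ENNReal.coe_le_coe, aux]
    convert hEnn using 1
    · exact ProbabilityMeasure.ennreal_coeFn_eq_coeFn_toMeasure ν G
    · congr 1
      ext k
      exact ProbabilityMeasure.ennreal_coeFn_eq_coeFn_toMeasure (νk k) G
  have := MeasureTheory.tendsto_of_forall_isOpen_le_liminf h_opens
  exact ProbabilityMeasure.tendsto_iff_forall_integral_tendsto.mp this
end

section
/- Extended Portmanteau / mapping theorem, lower semicontinuity: let X be a topological space admitting a countable family of continuous real-valued functions that separates points, and let (μ_k) be a tight sequence of Borel probability measures on X converging weakly to a Borel probability measure μ. Let ζ: X → [0, ∞] be a function such that the sublevel set {x ∈ X : ζ(x) ≤ t} is sequentially closed for every t ≥ 0. Then ζ is measurable with respect to the μ-completion of the Borel σ-algebra and with respect to the μ_k-completion for every k, and ∫_X ζ dμ ≤ liminf_{k→∞} ∫_X ζ dμ_k. -/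
open MeasureTheory Filter Topology Set
open scoped ENNReal NNReal

lemma aux_layercake {α : Type*} [MeasurableSpace α] (ν : Measure α) {g : α → ENNReal}
    (hg : Measurable g) (m : ℕ) :
    ∫⁻ x, min (g x) m ∂ν = ∫⁻ t in Set.Ioo (0:ℝ) m, ν {a | ENNReal.ofReal t < g a} := by
  set f : α → ℝ := fun x => (min (g x) m).toReal with hf
  have hne : ∀ x, min (g x) m ≠ ∞ := fun x =>
    ((min_le_right _ _).trans_lt (ENNReal.natCast_lt_top m)).ne
  have hof : ∀ x, ENNReal.ofReal (f x) = min (g x) m := fun x => ENNReal.ofReal_toReal (hne x)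
  have hfm : Measurable f := (hg.min measurable_const).ennreal_toReal
  have key := lintegral_eq_lintegral_meas_lt ν (ae_of_all _ fun x => ENNReal.toReal_nonneg)
    hfm.aemeasurable
  have h1 : ∫⁻ x, min (g x) m ∂ν = ∫⁻ t in Ioi (0:ℝ), ν {a | t < f a} := by
    rw [← key]; exact lintegral_congr fun x => (hof x).symm
  rw [h1]
  have h2 : ∀ t ∈ Ioi (0:ℝ), ν {a | t < f a}
      = (Ioo (0:ℝ) m).indicator (fun t => ν {a | ENNReal.ofReal t < g a}) t := by
    intro t ht
    by_cases htm : t < m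
    · rw [indicator_of_mem (show t ∈ Ioo (0:ℝ) m from ⟨ht, htm⟩)]
      congr 1
      ext a
      simp only [mem_setOf_eq, hf]
      rw [← ENNReal.ofReal_lt_iff_lt_toReal ht.le (hne a), lt_min_iff]
      constructor
      · exact fun h => h.1
      · intro h
        refine ⟨h, ?_⟩
        calc ENNReal.ofReal t < ENNReal.ofReal m :=
              ENNReal.ofReal_lt_ofReal_iff (ht.trans htm) |>.mpr htm
          _ ≤ (m : ENNReal) := by simp [ENNReal.ofReal_natCast]
    · rw [indicator_of_notMem (fun hmem => htm hmem.2)]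
      convert measure_empty
      · ext a
        simp only [mem_setOf_eq, mem_empty_iff_false, iff_false, not_lt, hf]
        calc (min (g a) m).toReal ≤ ((m : ENNReal)).toReal :=
              ENNReal.toReal_mono (ENNReal.natCast_ne_top m) (min_le_right _ _)
          _ = m := by simp
          _ ≤ t := not_lt.mp htm
      · infer_instance
  rw [setLIntegral_congr_fun measurableSet_Ioi h2, lintegral_indicator measurableSet_Ioo,
    Measure.restrict_restrict measurableSet_Ioo, inter_eq_left.mpr Ioo_subset_Ioi_self]

/-- Extended Portmanteau / mapping theorem: lower semicontinuity. -/
theorem stmt_6 {X : Type*} [TopologicalSpace X] [MeasurableSpace X] [BorelSpace X]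
    (h : ℕ → X → ℝ) (hcont : ∀ n, Continuous (h n))
    (hsep : ∀ x y : X, x ≠ y → ∃ n, h n x ≠ h n y)
    (μk : ℕ → Measure X) (μ : Measure X)
    (hprobk : ∀ k, IsProbabilityMeasure (μk k)) (hprob : IsProbabilityMeasure μ)
    (htight : ∀ ε : ENNReal, 0 < ε → ∃ K : Set X, IsCompact K ∧ ∀ k, 1 - ε ≤ μk k K)
    (hconv : ∀ φ : BoundedContinuousFunction X ℝ,
      Tendsto (fun k => ∫ x, φ x ∂(μk k)) atTop (𝓝 (∫ x, φ x ∂μ)))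
    (ζ : X → ENNReal)
    (hsub : ∀ t : NNReal, IsSeqClosed {x : X | ζ x ≤ (t : ENNReal)}) :
    NullMeasurable ζ μ ∧ (∀ k, NullMeasurable ζ (μk k)) ∧
      ∫⁻ x, ζ x ∂μ ≤ atTop.liminf (fun k => ∫⁻ x, ζ x ∂(μk k)) := by
  classical
  set H : X → (ℕ → ℝ) := fun x n => h n x with hHdef
  have Hcont : Continuous H := continuous_pi hcont
  have Hinj : Function.Injective H := by
    intro x y hxy
    by_contra hne
    obtain ⟨n, hn⟩ := hsep x y hne
    exact hn (congrFun hxy n)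
  haveI : T2Space X := T2Space.of_injective_continuous Hinj Hcont
  have Hmeas : Measurable H := Hcont.measurable
  -- limsup of compact sets
  have keyB : ∀ C : Set X, IsCompact C → atTop.limsup (fun k => μk k C) ≤ μ C := by
    intro C hC
    have hmapP : IsProbabilityMeasure (μ.map H) := Measure.isProbabilityMeasure_map Hmeas.aemeasurable
    have hmapPk : ∀ k, IsProbabilityMeasure ((μk k).map H) := fun k =>
      Measure.isProbabilityMeasure_map Hmeas.aemeasurable
    set ν : ProbabilityMeasure (ℕ → ℝ) := ⟨μ.map H, hmapP⟩ with hν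
    set νk : ℕ → ProbabilityMeasure (ℕ → ℝ) := fun k => ⟨(μk k).map H, hmapPk k⟩ with hνk
    have htend : Tendsto νk atTop (𝓝 ν) := by
      rw [ProbabilityMeasure.tendsto_iff_forall_integral_tendsto]
      intro φ
      have hint : ∀ (ρ : Measure X), ∫ y, φ y ∂(ρ.map H) = ∫ x, φ (H x) ∂ρ := fun ρ =>
        integral_map Hmeas.aemeasurable φ.continuous.aestronglyMeasurable
      show Tendsto (fun k => ∫ ω, φ ω ∂((μk k).map H)) atTop (𝓝 (∫ ω, φ ω ∂(μ.map H)))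
      simp only [hint]
      have := hconv (φ.compContinuous ⟨H, Hcont⟩)
      simpa using this
    have hF : IsClosed (H '' C) := (hC.image Hcont).isClosed
    have hlim := ProbabilityMeasure.limsup_measure_closed_le_of_tendsto htend hF
    have hmapk : ∀ k, ((νk k : Measure (ℕ → ℝ))) (H '' C) = μk k C := fun k => by
      show ((μk k).map H) (H '' C) = μk k C
      rw [Measure.map_apply Hmeas hF.measurableSet, Set.preimage_image_eq C Hinj]
    have hmapμ : ((ν : Measure (ℕ → ℝ))) (H '' C) = μ C := by
      show (μ.map H) (H '' C) = μ C
      rw [Measure.map_apply Hmeas hF.measurableSet, Set.preimage_image_eq C Hinj]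
    calc atTop.limsup (fun k => μk k C)
        = atTop.limsup (fun k => ((νk k : Measure (ℕ → ℝ))) (H '' C)) := by
          simp_rw [hmapk]
      _ ≤ ((ν : Measure (ℕ → ℝ))) (H '' C) := hlim
      _ = μ C := hmapμ
  -- compact sets with large measure for all measures
  have htightμ : ∀ ε : ℝ≥0∞, 0 < ε →
      ∃ K : Set X, IsCompact K ∧ 1 - ε ≤ μ K ∧ ∀ k, 1 - ε ≤ μk k K := by
    intro ε hε
    obtain ⟨K, hK, hKk⟩ := htight ε hε
    refine ⟨K, hK, ?_, hKk⟩
    calc (1:ℝ≥0∞) - ε ≤ atTop.liminf (fun k => μk k K) := le_liminf_of_le (by isBoundedDefault)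
          (Eventually.of_forall hKk)
      _ ≤ atTop.limsup (fun k => μk k K) := liminf_le_limsup
      _ ≤ μ K := keyB K hK
  choose K hKcomp hKμ hKμk using fun n : ℕ =>
    htightμ ((n : ℝ≥0∞) + 1)⁻¹ (ENNReal.inv_pos.mpr (by simp))
  set T : Set X := ⋃ n, K n with hTdef
  have hKmeas : ∀ n, MeasurableSet (K n) := fun n => (hKcomp n).isClosed.measurableSet
  have hTmeas : MeasurableSet T := MeasurableSet.iUnion hKmeas
  -- null complement
  have hTnull : ∀ (ρ : Measure X), IsProbabilityMeasure ρ →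
      (∀ n : ℕ, 1 - ((n : ℝ≥0∞) + 1)⁻¹ ≤ ρ (K n)) → ρ Tᶜ = 0 := by
    intro ρ hρ hbound
    by_contra hne
    obtain ⟨n, hn⟩ := ENNReal.exists_inv_nat_lt hne
    have h1 : ρ Tᶜ ≤ ((n : ℝ≥0∞) + 1)⁻¹ := by
      have : ρ Tᶜ ≤ ρ (K n)ᶜ := measure_mono (compl_subset_compl.mpr (subset_iUnion K n))
      rw [prob_compl_eq_one_sub (hKmeas n)] at this
      refine this.trans ?_
      rw [tsub_le_iff_right]
      exact tsub_le_iff_left.mp (hbound n)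
    have h2 : ((n : ℝ≥0∞) + 1)⁻¹ ≤ (n : ℝ≥0∞)⁻¹ :=
      ENNReal.inv_le_inv.mpr (le_add_of_nonneg_right zero_le_one)
    exact absurd ((h1.trans h2).trans_lt hn |>.trans_le (le_refl _)) (lt_irrefl _)
  have hμTc : μ Tᶜ = 0 := hTnull μ hprob hKμ
  have hμkTc : ∀ k, μk k Tᶜ = 0 := fun k => hTnull (μk k) (hprobk k) (fun n => hKμk n k)
  -- sublevel sets intersected with K n are compact
  have hAK : ∀ (t : ℝ≥0) (n : ℕ), IsCompact ({x : X | ζ x ≤ (t : ℝ≥0∞)} ∩ K n) := by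
    intro t n
    haveI : CompactSpace (K n) := isCompact_iff_compactSpace.mp (hKcomp n)
    have hemb : Topology.IsClosedEmbedding (H ∘ (Subtype.val : K n → X)) :=
      (Hcont.comp continuous_subtype_val).isClosedEmbedding (Hinj.comp Subtype.val_injective)
    haveI : TopologicalSpace.PseudoMetrizableSpace (K n) :=
      hemb.toIsEmbedding.toIsInducing.pseudoMetrizableSpace
    have hseq : IsSeqClosed ((Subtype.val : K n → X) ⁻¹' {x : X | ζ x ≤ (t : ℝ≥0∞)}) := by
      intro u p hu hup
      exact hsub t hu ((continuous_subtype_val.tendsto p).comp hup)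
    have hcomp : IsCompact ((Subtype.val : K n → X) ''
        ((Subtype.val : K n → X) ⁻¹' {x : X | ζ x ≤ (t : ℝ≥0∞)})) :=
      (hseq.isClosed.isCompact).image continuous_subtype_val
    rwa [Subtype.image_preimage_coe, inter_comm] at hcomp
  set ζ' : X → ℝ≥0∞ := T.indicator ζ with hζ'def
  have hζ'meas : Measurable ζ' := by
    apply measurable_of_Iic
    intro s
    rcases eq_or_ne s ∞ with rfl | hs
    · have : ζ' ⁻¹' Iic ∞ = univ := by ext x; simp
      rw [this]; exact MeasurableSet.univ
    · have hs' : ((s.toNNReal : ℝ≥0) : ℝ≥0∞) = s := ENNReal.coe_toNNReal hs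
      have hset : ζ' ⁻¹' Iic s = Tᶜ ∪ ⋃ n, ({x : X | ζ x ≤ ((s.toNNReal : ℝ≥0) : ℝ≥0∞)} ∩ K n) := by
        ext x
        simp only [mem_preimage, mem_Iic, mem_union, mem_compl_iff, mem_iUnion, mem_inter_iff,
          mem_setOf_eq, hs']
        by_cases hx : x ∈ T
        · obtain ⟨n, hn⟩ := mem_iUnion.mp hx
          simp only [hζ'def, indicator_of_mem hx]
          exact ⟨fun hle => Or.inr ⟨n, hle, hn⟩, fun hc => hc.elim (fun hc => absurd hx hc)
            (fun ⟨m, hm1, _⟩ => hm1)⟩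
        · simp [hζ'def, indicator_of_notMem hx, hx]
      rw [hset]
      exact (hTmeas.compl).union (MeasurableSet.iUnion fun n =>
        (hAK _ n).isClosed.measurableSet)
  have haeeq : ∀ (ρ : Measure X), ρ Tᶜ = 0 → ζ =ᵐ[ρ] ζ' := by
    intro ρ hρ
    rw [Filter.EventuallyEq, ae_iff]
    refine measure_mono_null (fun x hx => ?_) hρ
    simp only [mem_setOf_eq] at hx
    by_contra hxT
    simp only [mem_compl_iff, not_not] at hxT
    exact hx (by simp [hζ'def, indicator_of_mem hxT])
  have hnm : ∀ (ρ : Measure X), ρ Tᶜ = 0 → NullMeasurable ζ ρ := fun ρ hρ =>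
    (hζ'meas.nullMeasurable).congr (haeeq ρ hρ).symm
  -- superlevel liminf inequality
  have hsuper : ∀ t : ℝ, 0 < t → μ {x | ENNReal.ofReal t < ζ' x}
      ≤ atTop.liminf (fun k => μk k {x | ENNReal.ofReal t < ζ' x}) := by
    intro t ht
    set s : ℝ≥0 := Real.toNNReal t with hs
    have hst : ((s : ℝ≥0) : ℝ≥0∞) = ENNReal.ofReal t := rfl
    apply ENNReal.le_of_forall_pos_le_add
    intro ε hε hfin
    have hε2 : ((ε : ℝ≥0∞)/2) ≠ 0 :=
      (ENNReal.div_pos (by exact_mod_cast hε.ne') ENNReal.ofNat_ne_top).ne'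
    obtain ⟨n, hn⟩ := ENNReal.exists_inv_nat_lt hε2
    set η : ℝ≥0∞ := ((n : ℝ≥0∞) + 1)⁻¹ with hη
    have hηε : η ≤ (ε : ℝ≥0∞)/2 :=
      ((ENNReal.inv_le_inv.mpr (le_add_of_nonneg_right zero_le_one)).trans_lt hn).le
    set C : Set X := {x : X | ζ x ≤ ((s : ℝ≥0) : ℝ≥0∞)} ∩ K n with hC
    have hCcomp : IsCompact C := hAK s n
    have hCmeas : MeasurableSet C := hCcomp.isClosed.measurableSet
    have hsub1 : {x | ENNReal.ofReal t < ζ' x} ⊆ Cᶜ := by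
      intro x hx hxC
      simp only [mem_setOf_eq] at hx
      obtain ⟨hx1, hx2⟩ := hxC
      have hxT : x ∈ T := mem_iUnion_of_mem n hx2
      rw [hζ'def] at hx
      simp only [indicator_of_mem hxT] at hx
      exact absurd hx (not_lt.mpr (hst ▸ hx1))
    have hμineq : μ {x | ENNReal.ofReal t < ζ' x} ≤ 1 - μ C :=
      (measure_mono hsub1).trans_eq (prob_compl_eq_one_sub hCmeas)
    have hkineq : ∀ k, (1:ℝ≥0∞) ≤ μk k {x | ENNReal.ofReal t < ζ' x} + μk k C + η := by
      intro k
      have hsub2 : K n \ C ⊆ {x | ENNReal.ofReal t < ζ' x} := by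
        intro x hx
        obtain ⟨hxK, hxC⟩ := hx
        have hxT : x ∈ T := mem_iUnion_of_mem n hxK
        simp only [mem_setOf_eq, hζ'def, indicator_of_mem hxT]
        rw [← hst]
        exact not_le.mp (fun hle => hxC ⟨hle, hxK⟩)
      have hcover : K n ⊆ (K n \ C) ∪ C := fun x hx => by
        by_cases hxC : x ∈ C
        · exact Or.inr hxC
        · exact Or.inl ⟨hx, hxC⟩
      calc (1:ℝ≥0∞) ≤ μk k (K n) + η := tsub_le_iff_right.mp (hKμk n k)
        _ ≤ (μk k (K n \ C) + μk k C) + η :=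
            add_le_add_left ((measure_mono hcover).trans (measure_union_le _ _)) η
        _ ≤ μk k {x | ENNReal.ofReal t < ζ' x} + μk k C + η :=
            add_le_add_left (add_le_add_left (measure_mono hsub2) _) η
    have hev : ∀ᶠ k in atTop, μk k C < μ C + (ε : ℝ≥0∞)/2 :=
      eventually_lt_of_limsup_lt ((keyB C hCcomp).trans_lt
        (ENNReal.lt_add_right (measure_ne_top μ C) hε2))
    have hLlower : (1:ℝ≥0∞) - (μ C + (ε : ℝ≥0∞)/2 + η)
        ≤ atTop.liminf (fun k => μk k {x | ENNReal.ofReal t < ζ' x}) := by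
      apply le_liminf_of_le (by isBoundedDefault)
      filter_upwards [hev] with k hk
      rw [tsub_le_iff_right]
      calc (1:ℝ≥0∞) ≤ μk k {x | ENNReal.ofReal t < ζ' x} + μk k C + η := hkineq k
        _ ≤ μk k {x | ENNReal.ofReal t < ζ' x} + (μ C + (ε : ℝ≥0∞)/2) + η :=
            add_le_add_left (add_le_add_right hk.le _) η
        _ = μk k {x | ENNReal.ofReal t < ζ' x} + (μ C + (ε : ℝ≥0∞)/2 + η) := by ring
    calc μ {x | ENNReal.ofReal t < ζ' x} ≤ 1 - μ C := hμineq
      _ ≤ (1 - (μ C + (ε : ℝ≥0∞)/2 + η)) + ((ε : ℝ≥0∞)/2 + η) := by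
          rw [tsub_le_iff_right]
          calc (1:ℝ≥0∞) ≤ (1 - (μ C + (ε : ℝ≥0∞)/2 + η)) + (μ C + (ε : ℝ≥0∞)/2 + η) :=
                le_tsub_add
            _ = (1 - (μ C + (ε : ℝ≥0∞)/2 + η)) + ((ε : ℝ≥0∞)/2 + η) + μ C := by ring
      _ ≤ atTop.liminf (fun k => μk k {x | ENNReal.ofReal t < ζ' x}) + ((ε : ℝ≥0∞)/2 + η) :=
          add_le_add_left hLlower _
      _ ≤ atTop.liminf (fun k => μk k {x | ENNReal.ofReal t < ζ' x}) + (ε : ℝ≥0∞) := by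
          refine add_le_add_right ?_ _
          calc (ε : ℝ≥0∞)/2 + η ≤ (ε : ℝ≥0∞)/2 + (ε : ℝ≥0∞)/2 := add_le_add_right hηε _
            _ = (ε : ℝ≥0∞) := ENNReal.add_halves _
  -- conclusion
  have hζ'int : ∀ (ρ : Measure X), ρ Tᶜ = 0 → ∫⁻ x, ζ x ∂ρ = ∫⁻ x, ζ' x ∂ρ := fun ρ hρ =>
    lintegral_congr_ae (haeeq ρ hρ)
  refine ⟨hnm μ hμTc, fun k => hnm (μk k) (hμkTc k), ?_⟩
  rw [hζ'int μ hμTc]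
  have hrw : (fun k => ∫⁻ x, ζ x ∂(μk k)) = (fun k => ∫⁻ x, ζ' x ∂(μk k)) :=
    funext fun k => hζ'int _ (hμkTc k)
  rw [hrw]
  have hmono_meas : ∀ (ρ : Measure X), Antitone (fun t : ℝ => ρ {x | ENNReal.ofReal t < ζ' x}) :=
    fun ρ t1 t2 h12 =>
      measure_mono (fun x hx => lt_of_le_of_lt (ENNReal.ofReal_le_ofReal h12) hx)
  have hsupmin : ∀ a : ℝ≥0∞, (⨆ m : ℕ, min a (m : ℝ≥0∞)) = a := by
    intro a
    apply le_antisymm (iSup_le fun m => min_le_left _ _)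
    rcases eq_or_ne a ∞ with rfl | ha
    · simp only [min_eq_right (le_top : (_ : ℝ≥0∞) ≤ ⊤)]
      rw [ENNReal.iSup_natCast]
    · obtain ⟨m, hm⟩ := ENNReal.exists_nat_gt ha
      exact le_iSup_of_le m (by rw [min_eq_left hm.le])
  have htrunc : ∀ (ρ : Measure X), ∫⁻ x, ζ' x ∂ρ = ⨆ m : ℕ, ∫⁻ x, min (ζ' x) m ∂ρ := by
    intro ρ
    rw [← lintegral_iSup (fun m => hζ'meas.min measurable_const)
      (fun m1 m2 h12 x => min_le_min le_rfl (by exact_mod_cast Nat.cast_le.mpr h12))]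
    exact lintegral_congr fun x => (hsupmin (ζ' x)).symm
  calc ∫⁻ x, ζ' x ∂μ = ⨆ m : ℕ, ∫⁻ x, min (ζ' x) m ∂μ := htrunc μ
    _ = ⨆ m : ℕ, ∫⁻ t in Ioo (0:ℝ) m, μ {x | ENNReal.ofReal t < ζ' x} := by
        simp_rw [aux_layercake μ hζ'meas]
    _ ≤ ⨆ m : ℕ, ∫⁻ t in Ioo (0:ℝ) m,
          atTop.liminf (fun k => μk k {x | ENNReal.ofReal t < ζ' x}) := by
        refine iSup_mono fun m => ?_
        have hanti : Antitone (fun t : ℝ =>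
            atTop.liminf (fun k => μk k {x | ENNReal.ofReal t < ζ' x})) :=
          fun t1 t2 h12 => liminf_le_liminf (Eventually.of_forall fun k =>
            hmono_meas (μk k) h12)
        exact setLIntegral_mono hanti.measurable (fun t ht => hsuper t ht.1)
    _ ≤ ⨆ m : ℕ, atTop.liminf
          (fun k => ∫⁻ t in Ioo (0:ℝ) m, μk k {x | ENNReal.ofReal t < ζ' x}) := by
        refine iSup_mono fun m => ?_
        exact lintegral_liminf_le (fun k => (hmono_meas (μk k)).measurable)
    _ = ⨆ m : ℕ, atTop.liminf (fun k => ∫⁻ x, min (ζ' x) m ∂(μk k)) := by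
        refine iSup_congr fun m => ?_
        congr 1
        funext k
        rw [aux_layercake _ hζ'meas]
    _ ≤ ⨆ m : ℕ, atTop.liminf (fun k => ∫⁻ x, ζ' x ∂(μk k)) :=
        iSup_mono fun m => liminf_le_liminf (Eventually.of_forall fun k =>
          lintegral_mono fun x => min_le_left _ _)
    _ = atTop.liminf (fun k => ∫⁻ x, ζ' x ∂(μk k)) := iSup_const
end

section
/- Convex lower semicontinuity under convergence in law on the weak topology: let (Ω, 𝓕, ℙ) be a probability space, 𝒰 a separable reflexive real Banach space, and 𝒰_w the space 𝒰 endowed with its weak topology. Let ψ: 𝒰 → ℝ be norm-continuous, convex, and bounded below. Let (u_n) be Borel random variables with values in 𝒰 whose laws ℒ(u_n) form a tight sequence on 𝒰_w converging weakly on 𝒰_w to a Borel probability measure P̃. Then ψ is Borel measurable on 𝒰 and ∫_𝒰 ψ dP̃ ≤ liminf_{n→∞} 𝔼[ψ(u_n)] (where both sides may equal +∞). -/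
open MeasureTheory Filter Topology

lemma aux_minorant {𝒰 : Type*} [NormedAddCommGroup 𝒰] [NormedSpace ℝ 𝒰]
    (ψ : 𝒰 → ℝ) (hψcont : Continuous ψ) (hψconv : ConvexOn ℝ Set.univ ψ)
    (q : 𝒰) (δ : ℝ) (hδ : 0 < δ) :
    ∃ (A : 𝒰 →L[ℝ] ℝ) (c : ℝ), (∀ y, A y + c ≤ ψ y) ∧ ψ q - δ ≤ A q + c := by
  set S : Set (𝒰 × ℝ) := {p : 𝒰 × ℝ | ψ p.1 < p.2} with hS
  have hSopen : IsOpen S := isOpen_lt (hψcont.comp continuous_fst) continuous_snd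
  have hSconv : Convex ℝ S := by
    have := hψconv.convex_strict_epigraph
    simpa [S] using this
  have hx : ((q, ψ q - δ) : 𝒰 × ℝ) ∉ S := by simp [S]; linarith
  obtain ⟨f, hf⟩ := geometric_hahn_banach_point_open hSconv hSopen hx
  set g : 𝒰 →L[ℝ] ℝ := f.comp (ContinuousLinearMap.inl ℝ 𝒰 ℝ) with hg
  set c' : ℝ := f (0, 1) with hc'def
  have hdecomp : ∀ (y : 𝒰) (t : ℝ), f (y, t) = g y + t * c' := by
    intro y t
    have : (y, t) = (y, (0:ℝ)) + t • ((0:𝒰), (1:ℝ)) := by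
      simp [Prod.ext_iff]
    rw [this, map_add, f.map_smul]
    simp [g, smul_eq_mul]
    exact Or.inl rfl
  have key : ∀ (y : 𝒰) (t : ℝ), ψ y < t → g q + (ψ q - δ) * c' < g y + t * c' := by
    intro y t ht
    have := hf (y, t) ht
    rwa [hdecomp, hdecomp] at this
  have hc' : 0 < c' := by
    have := key q (ψ q + 1) (by linarith)
    nlinarith
  have hle : ∀ y, g q + (ψ q - δ) * c' ≤ g y + ψ y * c' := by
    intro y
    by_contra h
    push_neg at h
    set s : ℝ := (g q + (ψ q - δ) * c' - g y) / c' with hsdef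
    have hs : ψ y < s := by
      rw [hsdef, lt_div_iff₀ hc']
      nlinarith
    have := key y s hs
    rw [hsdef] at this
    have h2 : g y + (g q + (ψ q - δ) * c' - g y) / c' * c' = g q + (ψ q - δ) * c' := by
      field_simp
      ring
    rw [h2] at this
    exact lt_irrefl _ this
  refine ⟨(-(c')⁻¹) • g, g q / c' + ψ q - δ, ?_, ?_⟩
  · intro y
    have h1 := hle y
    have h2 : c' * c'⁻¹ = 1 := mul_inv_cancel₀ hc'.ne'
    have h3 : (0:ℝ) ≤ c'⁻¹ := inv_nonneg.2 hc'.le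
    simp only [ContinuousLinearMap.coe_smul', Pi.smul_apply, smul_eq_mul, div_eq_mul_inv]
    have h4 := mul_le_mul_of_nonneg_right h1 h3
    rw [add_mul, mul_assoc, mul_inv_cancel₀ hc'.ne', mul_one, add_mul, mul_assoc,
      mul_inv_cancel₀ hc'.ne', mul_one] at h4
    linarith
  · have h2 : c' * c'⁻¹ = 1 := mul_inv_cancel₀ hc'.ne'
    simp only [ContinuousLinearMap.coe_smul', Pi.smul_apply, smul_eq_mul, div_eq_mul_inv]
    nlinarith

lemma aux_dense {𝒰 : Type*} [NormedAddCommGroup 𝒰] [NormedSpace ℝ 𝒰]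
    (ψ : 𝒰 → ℝ) (hψcont : Continuous ψ)
    (e : ℕ → 𝒰) (he : DenseRange e)
    (A : ℕ → ℕ → 𝒰 →L[ℝ] ℝ) (c : ℕ → ℕ → ℝ)
    (hA : ∀ j k, ∀ y, A j k y + c j k ≤ ψ y)
    (hA2 : ∀ j k, ψ (e j) - 1/(k+1) ≤ A j k (e j) + c j k)
    (x : 𝒰) (ε : ℝ) (hε : 0 < ε) :
    ∃ j k, ψ x - ε ≤ A j k x + c j k := by
  obtain ⟨r, hr, hball⟩ : ∃ r > 0, ∀ y, dist y x < r → |ψ y - ψ x| < ε/8 := by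
    obtain ⟨δ, hδ, h⟩ := Metric.continuousAt_iff.mp (hψcont.continuousAt (x := x))
      (ε/8) (by linarith)
    exact ⟨δ, hδ, fun y hy => by simpa [Real.dist_eq] using h hy⟩
  obtain ⟨j, hj⟩ := he.exists_dist_lt x (by linarith : (0:ℝ) < r/2)
  obtain ⟨k, hk⟩ := exists_nat_one_div_lt (by linarith : (0:ℝ) < ε/8)
  set q := e j with hq
  set δ' : ℝ := 1/((k:ℝ)+1) with hδ'def
  have hδ'pos : 0 < δ' := by positivity
  have hδ' : δ' < ε/8 := hk
  refine ⟨j, k, ?_⟩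
  have h1 := hA j k
  have h2 := hA2 j k
  rw [← hq] at h2
  rw [← hδ'def] at h2
  have hdqx : dist q x < r/2 := by rwa [dist_comm] at hj
  have habs1 : |ψ q - ψ x| < ε/8 := hball q (by linarith)
  set y2 := q + (q - x) with hy2
  have hdy2 : dist y2 x < r := by
    have : y2 - x = (q - x) + (q - x) := by rw [hy2]; abel
    rw [dist_eq_norm, this]
    have := norm_add_le (q - x) (q - x)
    rw [dist_eq_norm] at hdqx
    linarith
  have habs2 : |ψ y2 - ψ x| < ε/8 := hball y2 hdy2
  have hy2A : A j k y2 = A j k q + A j k (q - x) := by rw [hy2, map_add]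
  have hxA : A j k x = A j k q - A j k (q - x) := by
    have := map_sub (A j k) q x
    linarith [this]
  have hineq := h1 y2
  rw [hy2A] at hineq
  rw [abs_lt] at habs1 habs2
  rw [hxA]
  linarith
/-- Convex lower semicontinuity under convergence in law on the weak topology.
The inequality `∫ ψ dP̃ ≤ liminf 𝔼[ψ(uₙ)]`, in which both sides may be `+∞`, is
expressed via the Lebesgue integrals of `ψ - b` for any lower bound `b` of `ψ`. -/
theorem stmt_8 {Ω : Type*} [m0 : MeasurableSpace Ω] (P : Measure Ω) [IsProbabilityMeasure P]
    {𝒰 : Type*} [NormedAddCommGroup 𝒰] [NormedSpace ℝ 𝒰] [CompleteSpace 𝒰]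
    [TopologicalSpace.SeparableSpace 𝒰] [MeasurableSpace 𝒰] [BorelSpace 𝒰]
    (hrefl : Function.Surjective (NormedSpace.inclusionInDoubleDual ℝ 𝒰))
    (ψ : 𝒰 → ℝ) (hψcont : Continuous ψ) (hψconv : ConvexOn ℝ Set.univ ψ)
    (hψbdd : ∃ b : ℝ, ∀ x, b ≤ ψ x)
    (u : ℕ → Ω → 𝒰) (hu : ∀ n, Measurable (u n))
    (Ptilde : Measure 𝒰) (hPt : IsProbabilityMeasure Ptilde)
    (htight : ∀ ε : ENNReal, 0 < ε → ∃ K : Set 𝒰,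
      IsCompact (⇑(toWeakSpace ℝ 𝒰) '' K) ∧ ∀ n, 1 - ε ≤ P.map (u n) K)
    (hconv : ∀ φ : BoundedContinuousFunction (WeakSpace ℝ 𝒰) ℝ,
      Tendsto (fun n => ∫ ω, φ (toWeakSpace ℝ 𝒰 (u n ω)) ∂P) atTop
        (𝓝 (∫ x, φ (toWeakSpace ℝ 𝒰 x) ∂Ptilde))) :
    Measurable ψ ∧
      ∀ b : ℝ, (∀ x, b ≤ ψ x) →
        ∫⁻ x, ENNReal.ofReal (ψ x - b) ∂Ptilde
          ≤ atTop.liminf fun n => ∫⁻ ω, ENNReal.ofReal (ψ (u n ω) - b) ∂P := by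
  haveI := hPt
  refine ⟨hψcont.measurable, ?_⟩
  intro b hb
  set L : ENNReal := atTop.liminf fun n => ∫⁻ ω, ENNReal.ofReal (ψ (u n ω) - b) ∂P with hL
  -- Step 1: any bounded weakly continuous minorant of ψ - b has lintegral ≤ L
  have hevalc : ∀ (A' : 𝒰 →L[ℝ] ℝ),
      Continuous (fun x : WeakSpace ℝ 𝒰 => A' ((toWeakSpace ℝ 𝒰).symm x)) :=
    fun A' => WeakBilin.eval_continuous (topDualPairing ℝ 𝒰).flip A'
  have lemA : ∀ (h : 𝒰 → ℝ) (M : ℝ),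
      Continuous (fun x : WeakSpace ℝ 𝒰 => h ((toWeakSpace ℝ 𝒰).symm x)) →
      (∀ x, 0 ≤ h x) → (∀ x, h x ≤ ψ x - b) → (∀ x, h x ≤ M) →
      ∫⁻ x, ENNReal.ofReal (h x) ∂Ptilde ≤ L := by
    intro h M hwc h0 hle hM
    have hcont : Continuous h := by
      have : Continuous fun x : 𝒰 => h ((toWeakSpace ℝ 𝒰).symm (toWeakSpaceCLM ℝ 𝒰 x)) :=
        hwc.comp (toWeakSpaceCLM ℝ 𝒰).continuous
      simpa only [toWeakSpaceCLM_eq_toWeakSpace, LinearEquiv.symm_apply_apply] using this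
    set φ : BoundedContinuousFunction (WeakSpace ℝ 𝒰) ℝ :=
      BoundedContinuousFunction.mkOfBound ⟨fun x => h ((toWeakSpace ℝ 𝒰).symm x), hwc⟩
        (M + M) (by
          intro x y
          simp only [ContinuousMap.coe_mk]
          rw [Real.dist_eq, abs_le]
          constructor
          · linarith [h0 ((toWeakSpace ℝ 𝒰).symm x), hM ((toWeakSpace ℝ 𝒰).symm x),
              h0 ((toWeakSpace ℝ 𝒰).symm y), hM ((toWeakSpace ℝ 𝒰).symm y)]
          · linarith [h0 ((toWeakSpace ℝ 𝒰).symm x), hM ((toWeakSpace ℝ 𝒰).symm x),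
              h0 ((toWeakSpace ℝ 𝒰).symm y), hM ((toWeakSpace ℝ 𝒰).symm y)]) with hφdef
    have hφ : ∀ z : 𝒰, φ (toWeakSpace ℝ 𝒰 z) = h z := by
      intro z
      show h ((toWeakSpace ℝ 𝒰).symm (toWeakSpace ℝ 𝒰 z)) = h z
      rw [LinearEquiv.symm_apply_apply]
    have hconvφ := hconv φ
    simp only [hφ] at hconvφ
    have hint : Integrable h Ptilde := by
      refine ⟨hcont.measurable.aestronglyMeasurable, ?_⟩
      apply HasFiniteIntegral.of_bounded (C := M)
      filter_upwards with x
      rw [Real.norm_eq_abs, abs_of_nonneg (h0 x)]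
      exact hM x
    have hintn : ∀ n, Integrable (fun ω => h (u n ω)) P := by
      intro n
      refine ⟨(hcont.measurable.comp (hu n)).aestronglyMeasurable, ?_⟩
      apply HasFiniteIntegral.of_bounded (C := M)
      filter_upwards with ω
      rw [Real.norm_eq_abs, abs_of_nonneg (h0 _)]
      exact hM _
    have key1 : ENNReal.ofReal (∫ x, h x ∂Ptilde) = ∫⁻ x, ENNReal.ofReal (h x) ∂Ptilde :=
      ofReal_integral_eq_lintegral_ofReal hint (Filter.Eventually.of_forall h0)
    have key2 : ∀ n, ENNReal.ofReal (∫ ω, h (u n ω) ∂P)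
        ≤ ∫⁻ ω, ENNReal.ofReal (ψ (u n ω) - b) ∂P := by
      intro n
      rw [ofReal_integral_eq_lintegral_ofReal (hintn n)
        (Filter.Eventually.of_forall fun ω => h0 _)]
      exact lintegral_mono fun ω => ENNReal.ofReal_le_ofReal (hle _)
    have hlim : Tendsto (fun n => ENNReal.ofReal (∫ ω, h (u n ω) ∂P)) atTop
        (𝓝 (ENNReal.ofReal (∫ x, h x ∂Ptilde))) :=
      (ENNReal.continuous_ofReal.tendsto _).comp hconvφ
    rw [← key1, ← hlim.liminf_eq]
    exact liminf_le_liminf (Filter.Eventually.of_forall key2)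
  -- Step 2: countable family of affine minorants
  haveI : Nonempty 𝒰 := ⟨0⟩
  set e : ℕ → 𝒰 := TopologicalSpace.denseSeq 𝒰 with he_def
  have he : DenseRange e := TopologicalSpace.denseRange_denseSeq 𝒰
  have hmin : ∀ j k : ℕ, ∃ (A : 𝒰 →L[ℝ] ℝ) (cc : ℝ),
      (∀ y, A y + cc ≤ ψ y) ∧ ψ (e j) - 1/((k:ℝ)+1) ≤ A (e j) + cc := by
    intro j k
    exact aux_minorant ψ hψcont hψconv (e j) (1/((k:ℝ)+1)) (by positivity)
  choose A c hAle hA2 using hmin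
  have hdense : ∀ (x : 𝒰) (ε : ℝ), 0 < ε → ∃ j k, ψ x - ε ≤ A j k x + c j k :=
    aux_dense ψ hψcont e he A c hAle hA2
  -- Step 3: the increasing sequence of truncated maxima
  set E3 : ℕ ≃ ℕ × ℕ × ℕ := (Denumerable.eqv (ℕ × ℕ × ℕ)).symm with hE3def
  set g : ℕ → 𝒰 → ℝ := fun i x =>
    max (min (A (E3 i).1 (E3 i).2.1 x + c (E3 i).1 (E3 i).2.1 - b) ((E3 i).2.2 : ℝ)) 0
    with hgdef
  have hg0 : ∀ i x, 0 ≤ g i x := fun i x => le_max_right _ _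
  have hgle : ∀ i x, g i x ≤ ψ x - b := by
    intro i x
    have h1 := hAle (E3 i).1 (E3 i).2.1 x
    have h2 := hb x
    simp only [hgdef, max_le_iff]
    exact ⟨le_trans (min_le_left _ _) (by linarith), by linarith⟩
  have hgbd : ∀ i x, g i x ≤ ((E3 i).2.2 : ℝ) := by
    intro i x
    simp only [hgdef, max_le_iff]
    exact ⟨min_le_right _ _, by positivity⟩
  have hgwc : ∀ i, Continuous (fun x : WeakSpace ℝ 𝒰 => g i ((toWeakSpace ℝ 𝒰).symm x)) := by
    intro i
    simp only [hgdef]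
    exact ((((hevalc (A (E3 i).1 (E3 i).2.1)).add continuous_const).sub
      continuous_const).min continuous_const).max continuous_const
  set G : ℕ → 𝒰 → ℝ := fun n => Nat.rec (g 0) (fun n Gn x => max (Gn x) (g (n+1) x)) n
    with hGdef
  have hGsucc : ∀ n x, G (n+1) x = max (G n x) (g (n+1) x) := fun n x => rfl
  have hGnn : ∀ n x, 0 ≤ G n x := by
    intro n
    induction n with
    | zero => exact hg0 0
    | succ n ih => intro x; rw [hGsucc]; exact le_trans (ih x) (le_max_left _ _)
  have hGle : ∀ n x, G n x ≤ ψ x - b := by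
    intro n
    induction n with
    | zero => exact hgle 0
    | succ n ih => intro x; rw [hGsucc]; exact max_le (ih x) (hgle _ x)
  have hGwc : ∀ n, Continuous (fun x : WeakSpace ℝ 𝒰 => G n ((toWeakSpace ℝ 𝒰).symm x)) := by
    intro n
    induction n with
    | zero => exact hgwc 0
    | succ n ih => exact ih.max (hgwc (n+1))
  have hGbd : ∀ n, ∃ M, ∀ x, G n x ≤ M := by
    intro n
    induction n with
    | zero => exact ⟨((E3 0).2.2 : ℝ), hgbd 0⟩
    | succ n ih =>
      obtain ⟨M, hM⟩ := ih
      exact ⟨max M ((E3 (n+1)).2.2 : ℝ), fun x => by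
        rw [hGsucc]; exact max_le_max (hM x) (hgbd _ x)⟩
  have hGmono : ∀ x, Monotone fun n => G n x := by
    intro x
    apply monotone_nat_of_le_succ
    intro n
    rw [hGsucc]
    exact le_max_left _ _
  have hgG : ∀ i x, g i x ≤ G i x := by
    intro i x
    cases i with
    | zero => exact le_refl _
    | succ n => rw [hGsucc]; exact le_max_right _ _
  -- Step 4: pointwise supremum
  have hsup : ∀ x, (⨆ n, ENNReal.ofReal (G n x)) = ENNReal.ofReal (ψ x - b) := by
    intro x
    apply le_antisymm
    · exact iSup_le fun n => ENNReal.ofReal_le_ofReal (hGle n x)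
    · apply ENNReal.le_of_forall_pos_le_add
      intro ε hε _
      have hεR : (0:ℝ) < (ε:ℝ) := hε
      obtain ⟨j, k, hjk⟩ := hdense x (ε:ℝ) hεR
      set m : ℕ := Nat.ceil (ψ x - b) with hm
      set i := E3.symm (j, k, m) with hi
      have hE3i : E3 i = (j, k, m) := E3.apply_symm_apply _
      have hgi : ψ x - b - (ε:ℝ) ≤ g i x := by
        simp only [hgdef, hE3i]
        have h1 : A j k x + c j k - b ≤ (m:ℝ) := by
          have h2 := hAle j k x
          have hceil := Nat.le_ceil (ψ x - b)
          simp only [hm]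
          linarith
        rw [min_eq_left h1]
        exact le_trans (by linarith) (le_max_left _ _)
      calc ENNReal.ofReal (ψ x - b)
          ≤ ENNReal.ofReal (g i x + (ε:ℝ)) := ENNReal.ofReal_le_ofReal (by linarith)
        _ ≤ ENNReal.ofReal (g i x) + ENNReal.ofReal (ε:ℝ) := ENNReal.ofReal_add_le
        _ ≤ (⨆ n, ENNReal.ofReal (G n x)) + (ε:ENNReal) := by
            refine add_le_add ?_ ?_
            · exact le_trans (ENNReal.ofReal_le_ofReal (hgG i x))
                (le_iSup (fun n => ENNReal.ofReal (G n x)) i)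
            · rw [ENNReal.ofReal_coe_nnreal]
  -- Step 5: conclusion via monotone convergence
  have hGc : ∀ n, Continuous (G n) := by
    intro n
    have : Continuous fun x : 𝒰 => G n ((toWeakSpace ℝ 𝒰).symm (toWeakSpaceCLM ℝ 𝒰 x)) :=
      (hGwc n).comp (toWeakSpaceCLM ℝ 𝒰).continuous
    simpa only [toWeakSpaceCLM_eq_toWeakSpace, LinearEquiv.symm_apply_apply] using this
  calc ∫⁻ x, ENNReal.ofReal (ψ x - b) ∂Ptilde
      = ∫⁻ x, ⨆ n, ENNReal.ofReal (G n x) ∂Ptilde :=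
        lintegral_congr fun x => (hsup x).symm
    _ = ⨆ n, ∫⁻ x, ENNReal.ofReal (G n x) ∂Ptilde :=
        lintegral_iSup
          (fun n => ENNReal.measurable_ofReal.comp (hGc n).measurable)
          (fun n k hnk x => ENNReal.ofReal_le_ofReal (hGmono x hnk))
    _ ≤ L := by
        refine iSup_le fun n => ?_
        obtain ⟨M, hM⟩ := hGbd n
        exact lemA (G n) M (hGwc n) (hGnn n) (hGle n) hM
end

section
/- Sequentially continuous maps preserve tightness: let X be a topological space in which every compact subset (with the subspace topology) is metrizable, let Y be a topological space, and let γ: X → Y be Borel measurable and sequentially continuous (x_n → x implies γ(x_n) → γ(x)). If (μ_k) is a tight sequence of Borel probability measures on X, then the pushforward measures (μ_k ∘ γ⁻¹) form a tight sequence of Borel probability measures on Y. -/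
open MeasureTheory

/-- Sequentially continuous maps preserve tightness. -/
theorem stmt_9 {X Y : Type*} [TopologicalSpace X] [MeasurableSpace X] [BorelSpace X]
    [TopologicalSpace Y] [MeasurableSpace Y] [BorelSpace Y]
    (hmetr : ∀ K : Set X, IsCompact K → TopologicalSpace.MetrizableSpace K)
    (γ : X → Y) (hγmeas : Measurable γ) (hγseq : SeqContinuous γ)
    (μ : ℕ → Measure X) (hprob : ∀ k, IsProbabilityMeasure (μ k))
    (htight : ∀ ε : ENNReal, 0 < ε → ∃ K : Set X, IsCompact K ∧ ∀ k, 1 - ε ≤ μ k K) :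
    ∀ ε : ENNReal, 0 < ε → ∃ K : Set Y, IsCompact K ∧ ∀ k, 1 - ε ≤ (μ k).map γ K := by
  intro ε hε
  obtain ⟨K, hK, hKμ⟩ := htight ε hε
  haveI : TopologicalSpace.MetrizableSpace K := hmetr K hK
  haveI : CompactSpace K := isCompact_iff_compactSpace.mp hK
  have hseq : SeqContinuous fun x : K => γ x := by
    intro u x hux
    exact hγseq ((continuous_subtype_val.seqContinuous) hux)
  have hcont : Continuous fun x : K => γ x := hseq.continuous
  refine ⟨γ '' K, ?_, fun k => ?_⟩
  · have : γ '' K = Set.range fun x : K => γ x := by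
      ext y; simp
    rw [this]
    exact isCompact_range hcont
  · refine le_trans (le_trans (hKμ k) ?_) (Measure.le_map_apply hγmeas.aemeasurable _)
    exact measure_mono (Set.subset_preimage_image γ K)
end

section
/- Measurable selection of zeros of Carathéodory maps: let (Ω, 𝓕) be a measurable space, M ∈ ℕ, and let ψ: Ω × ℝ^M → ℝ^M be a map such that (i) for every u ∈ ℝ^M the map ω ↦ ψ(ω, u) is 𝓕-measurable, (ii) for every ω ∈ Ω the map u ↦ ψ(ω, u) is continuous, and (iii) for every ω ∈ Ω there exists u ∈ ℝ^M with ψ(ω, u) = 0. Then there exists an 𝓕-measurable map u: Ω → ℝ^M such that ψ(ω, u(ω)) = 0 holds for every ω ∈ Ω. -/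
open Filter Topology TopologicalSpace Metric

/-- Measurability of a `Nat.find`-style selection. -/
lemma meas_dite_find {Ω : Type*} [MeasurableSpace Ω] (p : Ω → ℕ → Prop)
    [∀ ω n, Decidable (p ω n)] [∀ ω, Decidable (∃ n, p ω n)]
    (hp : ∀ n, MeasurableSet {ω | p ω n}) :
    Measurable fun ω => if h : ∃ n, p ω n then Nat.find h else 0 := by
  apply measurable_to_countable'
  intro n
  have h1 : (fun ω => if h : ∃ n, p ω n then Nat.find h else 0) ⁻¹' {n} =
      ({ω | p ω n} ∩ ⋂ m ∈ Set.Iio n, {ω | p ω m}ᶜ) ∪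
        (if n = 0 then {ω | ∃ k, p ω k}ᶜ else ∅) := by
    ext ω
    simp only [Set.mem_preimage, Set.mem_singleton_iff, Set.mem_union, Set.mem_inter_iff,
      Set.mem_iInter, Set.mem_compl_iff, Set.mem_setOf_eq, Set.mem_Iio]
    by_cases h : ∃ k, p ω k
    · rw [dif_pos h, Nat.find_eq_iff h]
      constructor
      · rintro ⟨h1, h2⟩; exact Or.inl ⟨h1, fun m hm => h2 m hm⟩
      · rintro (⟨h1, h2⟩ | h1)
        · exact ⟨h1, fun m hm => h2 m hm⟩
        · rcases Nat.eq_zero_or_pos n with rfl | hn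
          · simp only [if_pos rfl, Set.mem_compl_iff, Set.mem_setOf_eq] at h1
            exact absurd h h1
          · simp only [if_neg hn.ne'] at h1; exact absurd h1 (Set.notMem_empty ω)
    · rw [dif_neg h]
      constructor
      · rintro rfl
        exact Or.inr (by simp only [if_pos rfl, Set.mem_compl_iff, Set.mem_setOf_eq]; exact h)
      · rintro (⟨h1, _⟩ | h1)
        · exact absurd ⟨n, h1⟩ h
        · rcases Nat.eq_zero_or_pos n with rfl | hn
          · rfl
          · simp only [if_neg hn.ne'] at h1; exact absurd h1 (Set.notMem_empty ω)
  rw [h1]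
  refine MeasurableSet.union ((hp n).inter (MeasurableSet.biInter (Set.to_countable _)
    fun m _ => (hp m).compl)) ?_
  split
  · have h2 : {ω | ∃ k, p ω k} = ⋃ k, {ω | p ω k} := Set.setOf_exists _
    rw [h2]
    exact (MeasurableSet.iUnion fun k => hp k).compl
  · exact MeasurableSet.empty

lemma meas_comp_nat {Ω : Type*} [MeasurableSpace Ω] {f : Ω → ℕ} (hf : Measurable f)
    {h : Ω → ℕ → ℕ} (hh : ∀ m, Measurable fun ω => h ω m) :
    Measurable fun ω => h ω (f ω) := by
  apply measurable_to_countable'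
  intro n
  have h1 : (fun ω => h ω (f ω)) ⁻¹' {n} = ⋃ m, f ⁻¹' {m} ∩ (fun ω => h ω m) ⁻¹' {n} := by
    ext ω
    simp only [Set.mem_preimage, Set.mem_singleton_iff, Set.mem_iUnion, Set.mem_inter_iff]
    exact ⟨fun hn => ⟨f ω, rfl, hn⟩, by rintro ⟨m, rfl, hn⟩; exact hn⟩
  rw [h1]
  exact MeasurableSet.iUnion fun m =>
    (hf (measurableSet_singleton m)).inter (hh m (measurableSet_singleton n))

/-- A continuous map has a zero in the closed ball iff it has arbitrarily small values at
points of a dense sequence inside the closed ball. -/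
lemma zero_in_ball_iff {M : ℕ} (f : EuclideanSpace ℝ (Fin M) → EuclideanSpace ℝ (Fin M))
    (hc : Continuous f) (e : ℕ → EuclideanSpace ℝ (Fin M)) (he : DenseRange e)
    (x : EuclideanSpace ℝ (Fin M)) (s : ℝ) (hs : 0 < s) :
    (∃ u, f u = 0 ∧ dist u x ≤ s) ↔
      ∀ k : ℕ, ∃ n : ℕ, dist (e n) x ≤ s ∧ ‖f (e n)‖ < ((k : ℝ) + 1)⁻¹ := by
  constructor
  · rintro ⟨u, hu0, hux⟩ k
    have hkpos : (0 : ℝ) < ((k : ℝ) + 1)⁻¹ := by positivity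
    have hV : IsOpen {v | ‖f v‖ < ((k : ℝ) + 1)⁻¹} :=
      isOpen_lt (continuous_norm.comp hc) continuous_const
    have huV : u ∈ {v | ‖f v‖ < ((k : ℝ) + 1)⁻¹} := by
      simp only [Set.mem_setOf_eq, hu0, norm_zero]; exact hkpos
    obtain ⟨δ, hδ, hball⟩ := Metric.isOpen_iff.1 hV u huV
    -- move slightly towards x
    set ε : ℝ := min (δ / (2 * s)) (1 / 2) with hε
    have hε0 : 0 < ε := by positivity
    have hε1 : ε < 1 := lt_of_le_of_lt (min_le_right _ _) (by norm_num)
    set t : ℝ := 1 - ε with ht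
    have ht0 : 0 < t := by simp only [ht, sub_pos]; exact hε1
    have ht1 : t < 1 := by simp only [ht]; linarith
    set w : EuclideanSpace ℝ (Fin M) := x + t • (u - x) with hw
    have hwx : dist w x = t * dist u x := by
      rw [hw, dist_eq_norm, add_sub_cancel_left, norm_smul, Real.norm_eq_abs,
        abs_of_pos ht0, dist_eq_norm]
    have hwu : dist w u = (1 - t) * dist u x := by
      have hwu' : w - u = (t - 1) • (u - x) := by
        simp only [hw]; module
      rw [dist_eq_norm, hwu', norm_smul, Real.norm_eq_abs, abs_of_neg (by linarith),
        dist_eq_norm]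
      ring_nf
    have hwball : w ∈ Metric.ball u δ := by
      rw [Metric.mem_ball, hwu]
      calc (1 - t) * dist u x ≤ ε * s := by
            apply mul_le_mul _ hux dist_nonneg (le_of_lt hε0)
            simp [ht]
        _ ≤ (δ / (2 * s)) * s := mul_le_mul_of_nonneg_right (min_le_left _ _) hs.le
        _ = δ / 2 := by field_simp
        _ < δ := by linarith
    have hwxlt : dist w x < s := by
      rw [hwx]
      calc t * dist u x ≤ t * s := mul_le_mul_of_nonneg_left hux ht0.le
        _ < 1 * s := by apply mul_lt_mul_of_pos_right ht1 hs
        _ = s := one_mul s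
    have hopen : IsOpen (Metric.ball x s ∩ Metric.ball u δ) :=
      Metric.isOpen_ball.inter Metric.isOpen_ball
    have hne : (Metric.ball x s ∩ Metric.ball u δ).Nonempty :=
      ⟨w, Metric.mem_ball.2 hwxlt, hwball⟩
    obtain ⟨n, hn⟩ := he.exists_mem_open hopen hne
    exact ⟨n, (Metric.mem_ball.1 hn.1).le, hball hn.2⟩
  · intro h
    choose n hn1 hn2 using h
    have hmem : ∀ k, e (n k) ∈ Metric.closedBall x s := fun k => Metric.mem_closedBall.2 (hn1 k)
    obtain ⟨u, hu, φ, hφ, hlim⟩ :=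
      (isCompact_closedBall x s).tendsto_subseq hmem
    refine ⟨u, ?_, Metric.mem_closedBall.1 hu⟩
    have h1 : Tendsto (fun j => f (e (n (φ j)))) atTop (𝓝 (f u)) :=
      (hc.tendsto u).comp hlim
    have h2 : Tendsto (fun j => f (e (n (φ j)))) atTop (𝓝 0) := by
      rw [tendsto_zero_iff_norm_tendsto_zero]
      refine squeeze_zero (f := fun j => ‖f (e (n (φ j)))‖) (g := fun j => ((j : ℝ) + 1)⁻¹) (fun j => norm_nonneg _)
        (fun j => ?_) ?_
      · calc ‖f (e (n (φ j)))‖ ≤ ((φ j : ℝ) + 1)⁻¹ := (hn2 (φ j)).le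
          _ ≤ ((j : ℝ) + 1)⁻¹ := by
            have hj : (j : ℝ) ≤ (φ j : ℝ) := Nat.cast_le.2 hφ.le_apply
            apply inv_anti₀ (by positivity)
            linarith
      · simpa [one_div] using tendsto_one_div_add_atTop_nhds_zero_nat (𝕜 := ℝ)
    exact tendsto_nhds_unique h1 h2

/-- Measurable selection of zeros of Carathéodory maps. -/
theorem stmt_16 {Ω : Type*} [𝓕 : MeasurableSpace Ω] (M : ℕ)
    (ψ : Ω → EuclideanSpace ℝ (Fin M) → EuclideanSpace ℝ (Fin M))
    (hmeas : ∀ u : EuclideanSpace ℝ (Fin M), Measurable fun ω => ψ ω u)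
    (hcont : ∀ ω : Ω, Continuous (ψ ω))
    (hzero : ∀ ω : Ω, ∃ u : EuclideanSpace ℝ (Fin M), ψ ω u = 0) :
    ∃ u : Ω → EuclideanSpace ℝ (Fin M), Measurable u ∧ ∀ ω, ψ ω (u ω) = 0 := by
  classical
  let e : ℕ → EuclideanSpace ℝ (Fin M) := TopologicalSpace.denseSeq _
  have he : DenseRange e := TopologicalSpace.denseRange_denseSeq _
  set r : ℕ → ℝ := fun k => (2⁻¹ : ℝ) ^ k with hrdef
  have hr0 : ∀ k, 0 < r k := fun k => by positivity
  have hr2 : ∀ k, r k = 2 * r (k + 1) := fun k => by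
    simp only [hrdef, pow_succ]; ring
  let Pred : Ω → ℕ → ℕ → Prop := fun ω n k => ∃ u, ψ ω u = 0 ∧ dist u (e n) ≤ r k
  have hPmeas : ∀ n k, MeasurableSet {ω | Pred ω n k} := by
    intro n k
    have h1 : {ω | Pred ω n k} = ⋂ (j : ℕ), ⋃ (m : ℕ) (_ : dist (e m) (e n) ≤ r k),
        {ω | ‖ψ ω (e m)‖ < ((j : ℝ) + 1)⁻¹} := by
      ext ω
      simp only [Set.mem_iInter, Set.mem_iUnion, Set.mem_setOf_eq, exists_prop]
      exact zero_in_ball_iff (ψ ω) (hcont ω) e he (e n) (r k) (hr0 k)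
    rw [h1]
    exact MeasurableSet.iInter fun j => MeasurableSet.iUnion fun m =>
      MeasurableSet.iUnion fun _ => measurableSet_lt ((hmeas (e m)).norm) measurable_const
  let g0 : Ω → ℕ := fun ω => if h : ∃ n, Pred ω n 0 then Nat.find h else 0
  let g : Ω → ℕ → ℕ → ℕ := fun ω k m =>
    if h : ∃ n, Pred ω n (k + 1) ∧ dist (e n) (e m) ≤ 3 * r (k + 1) then Nat.find h else 0
  let N : Ω → ℕ → ℕ := fun ω k => Nat.rec (g0 ω) (fun k ih => g ω k ih) k
  have hex0 : ∀ ω, ∃ n, Pred ω n 0 := by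
    intro ω
    obtain ⟨u, hu⟩ := hzero ω
    obtain ⟨n, hn⟩ := Metric.denseRange_iff.1 he u (r 0) (hr0 0)
    exact ⟨n, u, hu, hn.le⟩
  have hstep : ∀ ω k, Pred ω (N ω k) k →
      ∃ n, Pred ω n (k + 1) ∧ dist (e n) (e (N ω k)) ≤ 3 * r (k + 1) := by
    rintro ω k ⟨u, hu0, hud⟩
    obtain ⟨n, hn⟩ := Metric.denseRange_iff.1 he u (r (k + 1)) (hr0 _)
    refine ⟨n, ⟨u, hu0, hn.le⟩, ?_⟩
    calc dist (e n) (e (N ω k)) ≤ dist (e n) u + dist u (e (N ω k)) := dist_triangle _ _ _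
      _ ≤ r (k + 1) + r k := add_le_add (by rw [dist_comm]; exact hn.le) hud
      _ = 3 * r (k + 1) := by rw [hr2 k]; ring
  have key : ∀ ω k, Pred ω (N ω k) k := by
    intro ω k
    induction k with
    | zero =>
      show Pred ω (if h : ∃ n, Pred ω n 0 then Nat.find h else 0) 0
      rw [dif_pos (hex0 ω)]
      exact Nat.find_spec (hex0 ω)
    | succ k ih =>
      have h := hstep ω k ih
      show Pred ω (if hh : ∃ n, Pred ω n (k + 1) ∧ dist (e n) (e (N ω k)) ≤ 3 * r (k + 1)
        then Nat.find hh else 0) (k + 1)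
      rw [dif_pos h]
      exact (Nat.find_spec h).1
  have hdist : ∀ ω k, dist (e (N ω (k + 1))) (e (N ω k)) ≤ 3 * r (k + 1) := by
    intro ω k
    have h := hstep ω k (key ω k)
    have hEq : N ω (k + 1) = Nat.find h := by
      show (if hh : ∃ n, Pred ω n (k + 1) ∧ dist (e n) (e (N ω k)) ≤ 3 * r (k + 1)
        then Nat.find hh else 0) = Nat.find h
      rw [dif_pos h]
    rw [hEq]
    exact (Nat.find_spec h).2
  have hNmeas : ∀ k, Measurable fun ω => N ω k := by
    intro k
    induction k with
    | zero => exact meas_dite_find (fun ω n => Pred ω n 0) (fun n => hPmeas n 0)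
    | succ k ih =>
      have hgm : ∀ m, Measurable fun ω => g ω k m := fun m =>
        meas_dite_find (fun ω n => Pred ω n (k + 1) ∧ dist (e n) (e m) ≤ 3 * r (k + 1))
          (fun n => (hPmeas n (k + 1)).inter (MeasurableSet.const _))
      exact meas_comp_nat ih hgm
  have hcauchy : ∀ ω, CauchySeq fun k => e (N ω k) := by
    intro ω
    apply cauchySeq_of_le_geometric 2⁻¹ (3 / 2) (by norm_num)
    intro k
    have h := hdist ω k
    rw [dist_comm] at h
    calc dist (e (N ω k)) (e (N ω (k + 1))) ≤ 3 * r (k + 1) := h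
      _ = 3 / 2 * 2⁻¹ ^ k := by simp only [hrdef, pow_succ]; ring
  have hlim : ∀ ω, ∃ l, Tendsto (fun k => e (N ω k)) atTop (𝓝 l) := fun ω =>
    cauchySeq_tendsto_of_complete (hcauchy ω)
  refine ⟨fun ω => (hlim ω).choose, ?_, ?_⟩
  · refine measurable_of_tendsto_metrizable (f := fun k ω => e (N ω k))
      (fun k => measurable_from_nat.comp (hNmeas k)) ?_
    rw [tendsto_pi_nhds]
    exact fun ω => (hlim ω).choose_spec
  · intro ω
    choose z hz0 hzd using key ω
    have hzt : Tendsto z atTop (𝓝 ((hlim ω).choose)) := by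
      rw [tendsto_iff_dist_tendsto_zero]
      refine squeeze_zero (g := fun k => r k + dist (e (N ω k)) ((hlim ω).choose))
        (fun k => dist_nonneg) (fun k => ?_) ?_
      · exact (dist_triangle _ _ _).trans (add_le_add (hzd k) le_rfl)
      · have h1 : Tendsto r atTop (𝓝 0) := by
          simpa [hrdef] using
            tendsto_pow_atTop_nhds_zero_of_lt_one (by norm_num : (0 : ℝ) ≤ 2⁻¹)
              (by norm_num : (2⁻¹ : ℝ) < 1)
        have h2 : Tendsto (fun k => dist (e (N ω k)) ((hlim ω).choose)) atTop (𝓝 0) :=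
          tendsto_iff_dist_tendsto_zero.1 (hlim ω).choose_spec
        simpa using h1.add h2
    have h1 : Tendsto (fun k => ψ ω (z k)) atTop (𝓝 (ψ ω ((hlim ω).choose))) :=
      ((hcont ω).tendsto _).comp hzt
    have h2 : Tendsto (fun k => ψ ω (z k)) atTop (𝓝 0) := by
      simp only [hz0]
      exact tendsto_const_nhds
    exact tendsto_nhds_unique h1 h2
end

section
/- Minty's lemma for monotone operators: let U be a reflexive real Banach space and A: U → U′ a map that is monotone ((A(v) − A(u))(v − u) ≥ 0 for all u, v ∈ U), demicontinuous (if u_n → u in norm then A(u_n)(v) → A(u)(v) for every v ∈ U), and bounded (A maps norm-bounded subsets of U to norm-bounded subsets of U′). Suppose (u_n) ⊆ U and u ∈ U satisfy f(u_n) → f(u) for every f ∈ U′ (weak convergence u_n ⇀ u), suppose a ∈ U′ satisfies A(u_n)(v) → a(v) for every v ∈ U, and suppose limsup_{n→∞} A(u_n)(u_n) ≤ a(u). Then a = A(u). -/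
open Filter Topology

/-- Minty's lemma for monotone operators. -/
theorem stmt_17 {U : Type*} [NormedAddCommGroup U] [NormedSpace ℝ U] [CompleteSpace U]
    (hrefl : Function.Surjective (NormedSpace.inclusionInDoubleDual ℝ U))
    (A : U → (U →L[ℝ] ℝ))
    (hmono : ∀ u v : U, 0 ≤ (A v - A u) (v - u))
    (hdemi : ∀ (un : ℕ → U) (u : U), Tendsto un atTop (𝓝 u) →
      ∀ v : U, Tendsto (fun n => A (un n) v) atTop (𝓝 (A u v)))
    (hbdd : ∀ s : Set U, Bornology.IsBounded s → Bornology.IsBounded (A '' s))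
    (un : ℕ → U) (u : U)
    (hweak : ∀ f : U →L[ℝ] ℝ, Tendsto (fun n => f (un n)) atTop (𝓝 (f u)))
    (a : U →L[ℝ] ℝ)
    (hAconv : ∀ v : U, Tendsto (fun n => A (un n) v) atTop (𝓝 (a v)))
    (hlimsup : limsup (fun n => A (un n) (un n)) atTop ≤ a u) :
    a = A u := by
  -- Step 1: the sequence `un` is norm-bounded (Banach–Steinhaus on the double dual)
  have hnorm : ∀ x : U, ‖NormedSpace.inclusionInDoubleDual ℝ U x‖ = ‖x‖ := fun x =>
    (NormedSpace.inclusionInDoubleDualLi ℝ (E := U)).norm_map x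
  obtain ⟨C, hC⟩ : ∃ C, ∀ n, ‖NormedSpace.inclusionInDoubleDual ℝ U (un n)‖ ≤ C := by
    apply banach_steinhaus
    intro f
    obtain ⟨c, hc⟩ := ((hweak f).norm.bddAbove_range)
    exact ⟨c, fun n => by
      simpa [NormedSpace.dual_def] using hc (Set.mem_range_self n)⟩
  have hunC : ∀ n, ‖un n‖ ≤ C := fun n => by rw [← hnorm]; exact hC n
  -- Step 2: `A (un n)` is norm-bounded
  obtain ⟨M, hM⟩ : ∃ M, ∀ n, ‖A (un n)‖ ≤ M := by
    have hs : Bornology.IsBounded (Set.range un) :=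
      (Metric.isBounded_iff_subset_closedBall 0).2
        ⟨C, by rintro _ ⟨n, rfl⟩; simpa [Metric.mem_closedBall] using hunC n⟩
    obtain ⟨M, hM⟩ := (hbdd _ hs).subset_closedBall 0
    exact ⟨M, fun n => by
      simpa [Metric.mem_closedBall] using hM ⟨un n, Set.mem_range_self n, rfl⟩⟩
  -- hence `A (un n) (un n)` is bounded above
  have hbAbove : IsBoundedUnder (· ≤ ·) atTop (fun n => A (un n) (un n)) :=
    Filter.isBoundedUnder_of ⟨M * C, fun n =>
      le_trans (le_abs_self _) <| le_trans ((A (un n)).le_opNorm (un n))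
        (mul_le_mul (hM n) (hunC n) (norm_nonneg _)
          ((norm_nonneg _).trans (hM 0)))⟩
  -- Step 3: key inequality `0 ≤ (a - A v) (u - v)` for every `v`
  have key : ∀ v : U, 0 ≤ (a - A v) (u - v) := by
    intro v
    have hle : ∀ n, A (un n) v + A v (un n) - A v v ≤ A (un n) (un n) := by
      intro n
      have h := hmono v (un n)
      simp only [ContinuousLinearMap.sub_apply, map_sub] at h
      linarith
    have hlim : Tendsto (fun n => A (un n) v + A v (un n) - A v v) atTop
        (𝓝 (a v + A v u - A v v)) :=
      ((hAconv v).add (hweak (A v))).sub tendsto_const_nhds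
    have h1 : a v + A v u - A v v ≤ a u := by
      have h2 := (limsup_le_limsup (Filter.Eventually.of_forall hle)
        hlim.isCoboundedUnder_le hbAbove).trans hlimsup
      rwa [hlim.limsup_eq] at h2
    simp only [ContinuousLinearMap.sub_apply, map_sub]
    linarith
  -- Step 4: Minty's trick
  have final : ∀ w : U, 0 ≤ (a - A u) w := by
    intro w
    have hvlim : Tendsto (fun n : ℕ => u - ((n : ℝ) + 1)⁻¹ • w) atTop (𝓝 u) := by
      have : Tendsto (fun n : ℕ => ((n : ℝ) + 1)⁻¹ • w) atTop (𝓝 ((0 : ℝ) • w)) :=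
        (tendsto_one_div_add_atTop_nhds_zero_nat.congr (by
          intro n; rw [one_div])).smul_const w
      simpa using tendsto_const_nhds.sub this
    have hAn : Tendsto (fun n : ℕ => A (u - ((n : ℝ) + 1)⁻¹ • w) w) atTop (𝓝 (A u w)) :=
      hdemi _ u hvlim w
    have hterm : ∀ n : ℕ, 0 ≤ a w - A (u - ((n : ℝ) + 1)⁻¹ • w) w := by
      intro n
      have h := key (u - ((n : ℝ) + 1)⁻¹ • w)
      have ht : (0 : ℝ) < ((n : ℝ) + 1)⁻¹ := by positivity
      simp only [ContinuousLinearMap.sub_apply, sub_sub_cancel, map_smul,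
        smul_eq_mul] at h
      nlinarith [h]
    have : 0 ≤ a w - A u w :=
      le_of_tendsto_of_tendsto' tendsto_const_nhds
        (tendsto_const_nhds.sub hAn) hterm
    simpa [ContinuousLinearMap.sub_apply] using this
  ext w
  have h1 := final w
  have h2 := final (-w)
  simp only [ContinuousLinearMap.sub_apply, map_neg] at h1 h2
  linarith
end
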